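/- arXiv:1210.5391 — 3 statements merged into one kernel-verified Lean document; each statement's English description precedes it below -/
import Mathlib

section
/- Let X be a right-continuous adapted ℝ^D-valued process on a filtered probability space satisfying the usual conditions (modeling D discounted risky assets alongside a constant bond B_t = 1). If X does not satisfy the no obvious arbitrage condition (NOA), then X admits a simple arbitrage, i.e., there exists a simple strategy Φ with V_∞(Φ;0) ≥ 0 P-a.s. and P(V_∞(Φ;0) > 0) > 0. -/
open MeasureTheory ProbabilityTheory Filter Set
open scoped ENNReal NNReal RealInnerProductSpace

namespace SimpleArbitrage

variable {Ω : Type*} {mΩ : MeasurableSpace Ω}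
variable {E : Type*} [NormedAddCommGroup E] [InnerProductSpace ℝ E] [MeasurableSpace E]

/-- The filtered probability space satisfies the usual conditions: the filtration is
right-continuous and contains all `P`-null sets. -/
def UsualConditions (F : Filtration ℝ mΩ) (P : Measure Ω) : Prop :=
  (∀ t : ℝ, (F t : MeasurableSpace Ω) = ⨅ s : Ioi t, F (s : ℝ)) ∧
  ∀ t : ℝ, ∀ N : Set Ω, P N = 0 → MeasurableSet[F t] N

/-- A (possibly infinite, extended-real-valued) stopping time. -/
def IsStoppingTimeE (F : Filtration ℝ mΩ) (σ : Ω → EReal) : Prop :=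
  ∀ t : ℝ, MeasurableSet[F t] {ω | σ ω ≤ (t : EReal)}

/-- `H` is `𝓕_σ`-measurable, where `σ` is a (possibly infinite) stopping time. -/
def MeasurableAtTime (F : Filtration ℝ mΩ) (σ : Ω → EReal) {α : Type*} [MeasurableSpace α]
    (H : Ω → α) : Prop :=
  ∀ B : Set α, MeasurableSet B → ∀ t : ℝ, MeasurableSet[F t] (H ⁻¹' B ∩ {ω | σ ω ≤ (t : EReal)})

/-- An `𝓕_σ`-measurable direction: an `𝓕_σ`-measurable random vector of norm one. -/
def IsDirection (F : Filtration ℝ mΩ) (P : Measure Ω) (σ : Ω → EReal) (H : Ω → E) : Prop :=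
  MeasurableAtTime F σ H ∧ ∀ᵐ ω ∂P, ‖H ω‖ = 1

/-- The no obvious arbitrage (NOA) condition: for every a.s. possibly finite stopping time `σ`
with `P(σ < ∞) > 0`, every `𝓕_σ`-measurable direction `H` and every `ε > 0`,
`P({σ < ∞} ∩ {sup_{t ∈ [σ,∞)} ⟪H, X t - X σ⟫ < ε}) > 0`. -/
def NOA (F : Filtration ℝ mΩ) (P : Measure Ω) (X : ℝ → Ω → E) : Prop :=
  ∀ σ : Ω → EReal, IsStoppingTimeE F σ → (∀ ω, 0 ≤ σ ω) → 0 < P {ω | σ ω < ⊤} →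
    ∀ H : Ω → E, IsDirection F P σ H → ∀ ε : ℝ, 0 < ε →
      0 < P ({ω | σ ω < ⊤} ∩
        {ω | ∃ δ : ℝ, δ < ε ∧ ∀ t : ℝ, σ ω ≤ (t : EReal) →
          ⟪H ω, X t ω - X (σ ω).toReal ω⟫ ≤ δ})

/-- A simple strategy: trading at finitely many a.s. finite stopping times
`0 = τ_0 ≤ τ_1 ≤ ⋯ ≤ τ_n`, holding the `𝓕_{τ_j}`-measurable portfolio `φ_j` on `(τ_j, τ_{j+1}]`. -/
structure SimpleStrategy (F : Filtration ℝ mΩ) (E : Type*) [MeasurableSpace E] where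
  n : ℕ
  τ : ℕ → Ω → ℝ
  φ : ℕ → Ω → E
  τ_zero : ∀ ω, τ 0 ω = 0
  τ_mono : ∀ j, j < n → ∀ ω, τ j ω ≤ τ (j + 1) ω
  τ_stopping : ∀ j, j ≤ n → IsStoppingTime F (fun ω => ((τ j ω : ℝ) : WithTop ℝ))
  φ_meas : ∀ j, j < n → MeasurableAtTime F (fun ω => ((τ j ω : ℝ) : EReal)) (φ j)

/-- The wealth process `V_t(Φ;0)` of a simple strategy from initial capital `0`. -/
noncomputable def wealth {F : Filtration ℝ mΩ} (X : ℝ → Ω → E) (Φ : SimpleStrategy F E)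
    (t : ℝ) (ω : Ω) : ℝ :=
  ∑ j ∈ Finset.range Φ.n,
    ⟪Φ.φ j ω, X (min t (Φ.τ (j + 1) ω)) ω - X (min t (Φ.τ j ω)) ω⟫

/-- The terminal wealth `V_∞(Φ;0) = lim_{t → ∞} V_t(Φ;0)` of a simple strategy. -/
noncomputable def wealthEnd {F : Filtration ℝ mΩ} (X : ℝ → Ω → E) (Φ : SimpleStrategy F E)
    (ω : Ω) : ℝ :=
  ∑ j ∈ Finset.range Φ.n, ⟪Φ.φ j ω, X (Φ.τ (j + 1) ω) ω - X (Φ.τ j ω) ω⟫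

/-- `Φ` is an arbitrage: `V_∞(Φ;0) ≥ 0` a.s. and `P(V_∞(Φ;0) > 0) > 0`. -/
def IsArbitrage {F : Filtration ℝ mΩ} (P : Measure Ω) (X : ℝ → Ω → E)
    (Φ : SimpleStrategy F E) : Prop :=
  (∀ᵐ ω ∂P, 0 ≤ wealthEnd X Φ ω) ∧ 0 < P {ω | 0 < wealthEnd X Φ ω}

/-- `Φ` is `c`-admissible: `inf_{t ∈ [0,∞)} V_t(Φ;0) ≥ -c` a.s. -/
def IsAdmissible {F : Filtration ℝ mΩ} (P : Measure Ω) (X : ℝ → Ω → E)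
    (Φ : SimpleStrategy F E) (c : ℝ) : Prop :=
  ∀ᵐ ω ∂P, ∀ t : ℝ, 0 ≤ t → -c ≤ wealth X Φ t ω

/-- The model `X` is free of arbitrage with simple strategies. -/
def NoSimpleArbitrage (F : Filtration ℝ mΩ) (P : Measure Ω) (X : ℝ → Ω → E) : Prop :=
  ∀ Φ : SimpleStrategy F E, ¬ IsArbitrage P X Φ

/-- Wealth process of the two-stopping-time strategy `H 1_{(σ,τ]}`. -/
noncomputable def pairWealth (X : ℝ → Ω → E) (H : Ω → E) (σ τ : Ω → ℝ) (t : ℝ) (ω : Ω) : ℝ :=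
  ⟪H ω, X (min t (τ ω)) ω - X (min t (σ ω)) ω⟫

/-- There is a `0`-admissible arbitrage of the form `H 1_{(σ,τ]}` with bounded stopping
times `σ ≤ τ` and an `𝓕_σ`-measurable direction `H`. -/
def ExistsAdmissiblePairArbitrage (F : Filtration ℝ mΩ) (P : Measure Ω)
    (X : ℝ → Ω → E) : Prop :=
  ∃ (σ τ : Ω → ℝ) (H : Ω → E),
    IsStoppingTime F (fun ω => ((σ ω : ℝ) : WithTop ℝ)) ∧ IsStoppingTime F (fun ω => ((τ ω : ℝ) : WithTop ℝ)) ∧ (∀ ω, 0 ≤ σ ω) ∧ (∀ ω, σ ω ≤ τ ω) ∧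
    (∃ K : ℝ, ∀ ω, τ ω ≤ K) ∧
    IsDirection F P (fun ω => ((σ ω : ℝ) : EReal)) H ∧
    (∀ᵐ ω ∂P, ∀ t : ℝ, 0 ≤ t → 0 ≤ pairWealth X H σ τ t ω) ∧
    (∀ᵐ ω ∂P, 0 ≤ ⟪H ω, X (τ ω) ω - X (σ ω) ω⟫) ∧
    0 < P {ω | 0 < ⟪H ω, X (τ ω) ω - X (σ ω) ω⟫}

/-- `σ_H = inf { t ≥ σ : ⟪H, X t - X σ⟫ > 0 }`, as an extended real number (`⊤` if no such
time exists). -/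
noncomputable def hittingAfter (X : ℝ → Ω → E) (σ : Ω → EReal) (H : Ω → E) (ω : Ω) : EReal :=
  sInf {u : EReal | ∃ t : ℝ, u = (t : EReal) ∧ σ ω ≤ (t : EReal) ∧
    0 < ⟪H ω, X t ω - X (σ ω).toReal ω⟫}

/-- Two-way crossing at the stopping time `σ` along the direction `H`: `σ_H = σ_{-H}` a.s. -/
def TWCAt (P : Measure Ω) (X : ℝ → Ω → E) (σ : Ω → EReal) (H : Ω → E) : Prop :=
  ∀ᵐ ω ∂P, hittingAfter X σ H ω = hittingAfter X σ (fun ω' => -H ω') ω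

/-- Two-way crossing (TWC) at bounded stopping times. -/
def TWCBounded (F : Filtration ℝ mΩ) (P : Measure Ω) (X : ℝ → Ω → E) : Prop :=
  ∀ σ : Ω → ℝ, IsStoppingTime F (fun ω => ((σ ω : ℝ) : WithTop ℝ)) → (∀ ω, 0 ≤ σ ω) → (∃ K : ℝ, ∀ ω, σ ω ≤ K) →
    ∀ H : Ω → E, IsDirection F P (fun ω => ((σ ω : ℝ) : EReal)) H →
      TWCAt P X (fun ω => ((σ ω : ℝ) : EReal)) H

/-- Two-way crossing (TWC) at a.s. finite stopping times. -/
def TWCFinite (F : Filtration ℝ mΩ) (P : Measure Ω) (X : ℝ → Ω → E) : Prop :=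
  ∀ σ : Ω → EReal, IsStoppingTimeE F σ → (∀ ω, 0 ≤ σ ω) → (∀ᵐ ω ∂P, σ ω < ⊤) →
    ∀ H : Ω → E, IsDirection F P σ H → TWCAt P X σ H

/-- A process is adapted to the filtration (on the relevant time interval `[0,∞)`). -/
def AdaptedProc {β : Type*} [TopologicalSpace β] (F : Filtration ℝ mΩ) (X : ℝ → Ω → β) : Prop :=
  ∀ t : ℝ, 0 ≤ t → StronglyMeasurable[F t] (X t)

/-- Right-continuity of paths. -/
def RightContinuousPaths {β : Type*} [TopologicalSpace β] (X : ℝ → Ω → β) : Prop :=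
  ∀ ω, ∀ t : ℝ, ContinuousWithinAt (fun s => X s ω) (Ici t) t

/-- Continuity of paths. -/
def ContinuousPaths {β : Type*} [TopologicalSpace β] (X : ℝ → Ω → β) : Prop :=
  ∀ ω, Continuous fun t => X t ω

/-- `M` is a martingale on the time interval `[0,∞)`. -/
def MartingaleOn [CompleteSpace E] (F : Filtration ℝ mΩ) (P : Measure Ω)
    (M : ℝ → Ω → E) : Prop :=
  (∀ t : ℝ, 0 ≤ t → StronglyMeasurable[F t] (M t)) ∧
  (∀ t : ℝ, 0 ≤ t → Integrable (M t) P) ∧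
  ∀ s t : ℝ, 0 ≤ s → s ≤ t → P[M t|F s] =ᵐ[P] M s

/-- `M` is a local martingale on `[0,∞)`: there is a localizing sequence of finite stopping
times increasing a.s. to `∞` such that each stopped process is a martingale. -/
def IsLocalMartingale [CompleteSpace E] (F : Filtration ℝ mΩ) (P : Measure Ω)
    (M : ℝ → Ω → E) : Prop :=
  ∃ τ : ℕ → Ω → ℝ, (∀ n, IsStoppingTime F (fun ω => ((τ n ω : ℝ) : WithTop ℝ))) ∧ (∀ n ω, 0 ≤ τ n ω) ∧
    (∀ n ω, τ n ω ≤ τ (n + 1) ω) ∧ (∀ᵐ ω ∂P, Tendsto (fun n => τ n ω) atTop atTop) ∧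
    ∀ n, MartingaleOn F P fun t ω => M (min t (τ n ω)) ω

/-- `Z` is `a`-Hölder continuous on compacts: for each `K ∈ ℕ` there is a positive random
variable `C_K` with `‖Z t - Z s‖ ≤ C_K (t-s)^a` for `0 ≤ s ≤ t ≤ K`. -/
def HolderOnCompacts {β : Type*} [NormedAddCommGroup β] (Z : ℝ → Ω → β) (a : ℝ) : Prop :=
  ∀ K : ℕ, ∃ C : Ω → ℝ, (∀ ω, 0 < C ω) ∧
    ∀ ω, ∀ s t : ℝ, 0 ≤ s → s ≤ t → t ≤ (K : ℝ) → ‖Z t ω - Z s ω‖ ≤ C ω * (t - s) ^ a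

/-- The σ-algebra generated by a process (on the time interval `[0,∞)`). -/
def processSigma {α : Type*} [MeasurableSpace α] (X : ℝ → Ω → α) : MeasurableSpace Ω :=
  ⨆ t : Ici (0 : ℝ), MeasurableSpace.comap (X (t : ℝ)) inferInstance

/-- The processes `X` and `Y` are independent. -/
def IndepProcesses {α β : Type*} [MeasurableSpace α] [MeasurableSpace β]
    (P : Measure Ω) (X : ℝ → Ω → α) (Y : ℝ → Ω → β) : Prop :=
  Indep (processSigma X) (processSigma Y) P

/-- `W` is a one-dimensional `(𝓕_t)`-Brownian motion. -/
def IsBrownianMotion (F : Filtration ℝ mΩ) (P : Measure Ω) (W : ℝ → Ω → ℝ) : Prop :=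
  AdaptedProc F W ∧ (∀ ω, W 0 ω = 0) ∧ (∀ ω, Continuous fun t => W t ω) ∧
  ∀ s t : ℝ, 0 ≤ s → s ≤ t →
    Indep (F s) (MeasurableSpace.comap (fun ω => W t ω - W s ω) inferInstance) P ∧
    Measure.map (fun ω => W t ω - W s ω) P = gaussianReal 0 (Real.toNNReal (t - s))

/-- `(W, B)` is a two-dimensional `(𝓕_t)`-Brownian motion. -/
def IsTwoDimBM (F : Filtration ℝ mΩ) (P : Measure Ω) (W B : ℝ → Ω → ℝ) : Prop :=
  IsBrownianMotion F P W ∧ IsBrownianMotion F P B ∧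
  ∀ s t : ℝ, 0 ≤ s → s ≤ t →
    Indep (F s)
      (MeasurableSpace.comap (fun ω => (W t ω - W s ω, B t ω - B s ω)) inferInstance) P ∧
    IndepFun (fun ω => W t ω - W s ω) (fun ω => B t ω - B s ω) P

/-- `W` is an `N`-dimensional `(𝓕_t)`-Brownian motion. -/
def IsMultiBM {N : ℕ} (F : Filtration ℝ mΩ) (P : Measure Ω)
    (W : ℝ → Ω → EuclideanSpace ℝ (Fin N)) : Prop :=
  AdaptedProc F W ∧ (∀ ω, W 0 ω = 0) ∧ (∀ ω, Continuous fun t => W t ω) ∧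
  ∀ s t : ℝ, 0 ≤ s → s ≤ t →
    Indep (F s) (MeasurableSpace.comap (fun ω => W t ω - W s ω) inferInstance) P ∧
    iIndepFun (fun (i : Fin N) ω => W t ω i - W s ω i) P ∧
    ∀ i : Fin N, Measure.map (fun ω => W t ω i - W s ω i) P
      = gaussianReal 0 (Real.toNNReal (t - s))

/-- The covariance function of fractional Brownian motion with Hurst parameter `Hu`. -/
noncomputable def fbmCov (Hu : ℝ) (s t : ℝ) : ℝ :=
  (|s| ^ (2 * Hu) + |t| ^ (2 * Hu) - |t - s| ^ (2 * Hu)) / 2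

/-- `Z` is a fractional Brownian motion with Hurst parameter `Hu`: a centered Gaussian
process with the fBm covariance, with paths Hölder continuous of any exponent `< Hu`. -/
def IsFractionalBM (P : Measure Ω) (Hu : ℝ) (Z : ℝ → Ω → ℝ) : Prop :=
  (∀ t : ℝ, Measurable (Z t)) ∧ (∀ ω, Z 0 ω = 0) ∧ (∀ ω, Continuous fun t => Z t ω) ∧
  (∀ a : ℝ, 0 < a → a < Hu → HolderOnCompacts Z a) ∧
  ∀ (k : ℕ) (c : Fin k → ℝ) (t : Fin k → ℝ), (∀ i, 0 ≤ t i) →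
    Measure.map (fun ω => ∑ i, c i * Z (t i) ω) P =
      gaussianReal 0 (Real.toNNReal (∑ i, ∑ j, c i * c j * fbmCov Hu (t i) (t j)))

/-- `I` is (a version of) the stochastic integral `∫_0^· h s dB_s`: a continuous adapted
local martingale vanishing at `0`, with quadratic variation `∫_0^· h_s^2 ds` and covariation
`⟨I, B⟩ = ∫_0^· h_s ds` (both encoded via the local martingale characterization). -/
def IsStochIntegral (F : Filtration ℝ mΩ) (P : Measure Ω) (h : ℝ → Ω → ℝ)
    (B I : ℝ → Ω → ℝ) : Prop :=
  (∀ ω, I 0 ω = 0) ∧ ContinuousPaths I ∧ AdaptedProc F I ∧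
  IsLocalMartingale F P I ∧
  IsLocalMartingale F P (fun t ω => I t ω ^ 2 - ∫ s in (0:ℝ)..t, (h s ω) ^ 2) ∧
  IsLocalMartingale F P (fun t ω => I t ω * B t ω - ∫ s in (0:ℝ)..t, h s ω)

/-- The filtration stopped at time `T`, i.e. `t ↦ 𝓕_{t ∧ T}`. -/
def stoppedFiltration (F : Filtration ℝ mΩ) (T : ℝ) : Filtration ℝ mΩ where
  seq t := F (min t T)
  mono' := fun _ _ hst => F.mono (min_le_min hst le_rfl)
  le' t := F.le (min t T)

/-- The model `(X_t, 𝓕_t)` is free of simple arbitrage on finite time horizons: for every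
`T > 0` the stopped model `(X_{t ∧ T}, 𝓕_{t ∧ T})` has no simple arbitrage. -/
def NoSimpleArbitrageFiniteHorizons (F : Filtration ℝ mΩ) (P : Measure Ω)
    (X : ℝ → Ω → E) : Prop :=
  ∀ T : ℝ, 0 < T → NoSimpleArbitrage (stoppedFiltration F T) P (fun t ω => X (min t T) ω)

/-- The no obvious arbitrage condition on the time interval `[0,T]`. -/
def NOAUpTo (F : Filtration ℝ mΩ) (P : Measure Ω) (X : ℝ → Ω → E) (T : ℝ) : Prop :=
  ∀ σ : Ω → ℝ, IsStoppingTime F (fun ω => ((σ ω : ℝ) : WithTop ℝ)) → (∀ ω, 0 ≤ σ ω ∧ σ ω ≤ T) → 0 < P {ω | σ ω < T} →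
    ∀ H : Ω → E, IsDirection F P (fun ω => ((σ ω : ℝ) : EReal)) H →
      ∀ ε : ℝ, 0 < ε →
        0 < P ({ω | σ ω < T} ∩
          {ω | ∃ δ : ℝ, δ < ε ∧ ∀ t : ℝ, σ ω ≤ t → t ≤ T →
            ⟪H ω, X t ω - X (σ ω) ω⟫ ≤ δ})

/-- `A` is the quadratic variation `⟨M⟩` of the continuous local martingale `M`:
`A` is continuous, increasing, adapted, starts at `0`, and `M² - A` is a local martingale. -/
def IsQuadVariation (F : Filtration ℝ mΩ) (P : Measure Ω) (M A : ℝ → Ω → ℝ) : Prop :=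
  (∀ ω, A 0 ω = 0) ∧ ContinuousPaths A ∧
  (∀ ω, ∀ s t : ℝ, 0 ≤ s → s ≤ t → A s ω ≤ A t ω) ∧
  AdaptedProc F A ∧
  IsLocalMartingale F P (fun t ω => M t ω * M t ω - A t ω)

/-- `A` is the matrix-valued quadratic variation `⟨M⟩` of the `D`-dimensional continuous
local martingale `M`: symmetric, continuous, adapted, `A_0 = 0` and `M^i M^j - A^{ij}` is a
local martingale for all `i, j`. -/
def IsMatrixQuadVariation {D : ℕ} (F : Filtration ℝ mΩ) (P : Measure Ω)
    (M : ℝ → Ω → EuclideanSpace ℝ (Fin D)) (A : ℝ → Ω → Matrix (Fin D) (Fin D) ℝ) : Prop :=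
  (∀ ω, A 0 ω = 0) ∧ (∀ ω i j, Continuous fun t => A t ω i j) ∧
  (∀ ω t, (A t ω).IsSymm) ∧
  (∀ i j : Fin D, AdaptedProc F (fun t ω => A t ω i j)) ∧
  ∀ i j : Fin D, IsLocalMartingale F P (fun t ω => M t ω i * M t ω j - A t ω i j)

/-- `G` is the augmentation (by `P`-null sets) of the natural filtration of `X`. -/
def IsAugmentedNaturalFiltration {β : Type*} [MeasurableSpace β] (P : Measure Ω)
    (X : ℝ → Ω → β) (G : Filtration ℝ mΩ) : Prop :=
  ∀ t : ℝ, (G t : MeasurableSpace Ω) =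
    (⨆ s : {s : ℝ // 0 ≤ s ∧ s ≤ t}, MeasurableSpace.comap (X s.1) inferInstance) ⊔
      MeasurableSpace.generateFrom {N : Set Ω | P N = 0}

set_option linter.unusedSectionVars false
set_option linter.unusedVariables false

private lemma ereal_ne_top {x : EReal} {r : ℝ} (h : x ≤ (r : EReal)) : x ≠ ⊤ :=
  (h.trans_lt (EReal.coe_lt_top r)).ne

private lemma ereal_ne_bot {x : EReal} (h0 : (0 : EReal) ≤ x) : x ≠ ⊥ := by
  intro hx; rw [hx] at h0; simp at h0

private lemma ereal_eq_coe {x : EReal} {r : ℝ} (h0 : (0 : EReal) ≤ x) (h : x ≤ (r : EReal)) :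
    x = ((x.toReal : ℝ) : EReal) := (EReal.coe_toReal (ereal_ne_top h) (ereal_ne_bot h0)).symm

private lemma ereal_toReal_le {x : EReal} {r : ℝ} (h0 : (0 : EReal) ≤ x) (h : x ≤ (r : EReal)) :
    x.toReal ≤ r := by
  have h' := h; rw [ereal_eq_coe h0 h] at h'; exact EReal.coe_le_coe_iff.mp h'

private lemma ereal_le_coe {x : EReal} {r s : ℝ} (h0 : (0 : EReal) ≤ x) (h : x ≤ (r : EReal))
    (hs : x.toReal ≤ s) : x ≤ (s : EReal) := by
  rw [ereal_eq_coe h0 h]; exact EReal.coe_le_coe_iff.mpr hs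

private lemma ereal_toReal_nonneg' {x : EReal} {r : ℝ} (h0 : (0 : EReal) ≤ x)
    (h : x ≤ (r : EReal)) : 0 ≤ x.toReal := by
  have h' := h0; rw [ereal_eq_coe h0 h] at h'
  rw [← EReal.coe_zero] at h'
  exact EReal.coe_le_coe_iff.mp h'

/-- The (truncated-at-`m`) buying time associated to the stopping time `σ`. -/
noncomputable def buyTime (σ : Ω → EReal) (m : ℕ) (ω : Ω) : ℝ :=
  if σ ω ≤ ((m : ℝ) : EReal) then (σ ω).toReal else m

/-- The set of rational times `q ≥ σ` (with `σ ≤ m`) at which the gain in direction `H`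
exceeds `a`. -/
def gainSet (X : ℝ → Ω → E) (σ : Ω → EReal) (H : Ω → E) (a : ℝ) (m : ℕ) (ω : Ω) : Set ℚ :=
  {q : ℚ | σ ω ≤ ((q : ℝ) : EReal) ∧ σ ω ≤ ((m : ℝ) : EReal) ∧
    a < ⟪H ω, X (q : ℝ) ω - X (σ ω).toReal ω⟫}

open Classical in
/-- The selling time: essentially the first (rational) time after `σ` at which the gain in
direction `H` exceeds `a`, defaulting to the buying time when no such time exists. -/
noncomputable def sellTime (X : ℝ → Ω → E) (σ : Ω → EReal) (H : Ω → E) (a : ℝ) (m : ℕ)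
    (ω : Ω) : ℝ :=
  if (gainSet X σ H a m ω).Nonempty then
    sInf ((fun q : ℚ => (q : ℝ)) '' gainSet X σ H a m ω)
  else buyTime σ m ω

section Lemmas

variable {X : ℝ → Ω → E} {σ : Ω → EReal} {H : Ω → E} {a : ℝ} {m : ℕ}

private lemma buyTime_nonneg (hσ0 : ∀ ω, (0 : EReal) ≤ σ ω) (ω : Ω) : 0 ≤ buyTime σ m ω := by
  unfold buyTime
  split_ifs with h
  · exact ereal_toReal_nonneg' (hσ0 ω) h
  · exact Nat.cast_nonneg m

private lemma buyTime_le (hσ0 : ∀ ω, (0 : EReal) ≤ σ ω) (ω : Ω) : buyTime σ m ω ≤ m := by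
  unfold buyTime
  split_ifs with h
  · exact ereal_toReal_le (hσ0 ω) h
  · exact le_refl _

private lemma gainSet_q_nonneg (hσ0 : ∀ ω, (0 : EReal) ≤ σ ω) {ω : Ω} {q : ℚ}
    (hq : q ∈ gainSet X σ H a m ω) : (0 : ℝ) ≤ (q : ℝ) := by
  have := (hσ0 ω).trans hq.1
  rw [← EReal.coe_zero] at this
  exact EReal.coe_le_coe_iff.mp this

private lemma buyTime_le_gainSet (hσ0 : ∀ ω, (0 : EReal) ≤ σ ω) {ω : Ω} {q : ℚ}
    (hq : q ∈ gainSet X σ H a m ω) : buyTime σ m ω ≤ (q : ℝ) := by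
  unfold buyTime
  rw [if_pos hq.2.1]
  exact ereal_toReal_le (hσ0 ω) hq.1

private lemma gainSet_bddBelow (hσ0 : ∀ ω, (0 : EReal) ≤ σ ω) (ω : Ω) :
    BddBelow ((fun q : ℚ => (q : ℝ)) '' gainSet X σ H a m ω) := by
  refine ⟨0, ?_⟩
  rintro x ⟨q, hq, rfl⟩
  exact gainSet_q_nonneg hσ0 hq

private lemma buyTime_le_sellTime (hσ0 : ∀ ω, (0 : EReal) ≤ σ ω) (ω : Ω) :
    buyTime σ m ω ≤ sellTime X σ H a m ω := by
  unfold sellTime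
  split_ifs with h
  · refine le_csInf (h.image _) ?_
    rintro x ⟨q, hq, rfl⟩
    exact buyTime_le_gainSet hσ0 hq
  · exact le_refl _

end Lemmas

private lemma buyTime_isStoppingTime (F : Filtration ℝ mΩ) {σ : Ω → EReal}
    (hσST : IsStoppingTimeE F σ) (hσ0 : ∀ ω, (0 : EReal) ≤ σ ω) (m : ℕ) :
    IsStoppingTime F (fun ω => ((buyTime σ m ω : ℝ) : WithTop ℝ)) := by
  intro t
  simp only [WithTop.coe_le_coe]
  by_cases hmt : (m : ℝ) ≤ t
  · have h : {ω | buyTime σ m ω ≤ t} = univ := by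
      ext ω; simp only [mem_setOf_eq, mem_univ, iff_true]
      exact (buyTime_le hσ0 ω).trans hmt
    rw [h]; exact MeasurableSet.univ
  · have h : {ω | buyTime σ m ω ≤ t} = {ω | σ ω ≤ (t : EReal)} := by
      ext ω
      simp only [mem_setOf_eq, buyTime]
      by_cases hσm : σ ω ≤ ((m : ℝ) : EReal)
      · rw [if_pos hσm]
        exact ⟨fun h => ereal_le_coe (hσ0 ω) hσm h, fun h => ereal_toReal_le (hσ0 ω) h⟩
      · rw [if_neg hσm]
        constructor
        · intro h; exact absurd h hmt
        · intro h
          exact absurd (h.trans (EReal.coe_le_coe_iff.mpr (le_of_lt (lt_of_not_ge hmt)))) hσm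
    rw [h]; exact hσST t

private lemma az_iff {σ : Ω → EReal} (hσ0 : ∀ ω, (0 : EReal) ≤ σ ω) {c : ℝ} {k : ℕ} {z : ℤ}
    {ω : Ω} :
    (σ ω ≤ ((min c ((z : ℝ) / 2 ^ k) : ℝ) : EReal) ∧
      ¬ σ ω ≤ ((min c (((z : ℝ) - 1) / 2 ^ k) : ℝ) : EReal))
      ↔ (σ ω ≤ (c : EReal) ∧ ⌈(σ ω).toReal * 2 ^ k⌉ = z) := by
  have h2k : (0 : ℝ) < 2 ^ k := by positivity
  constructor
  · rintro ⟨h1, h2⟩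
    have hσc : σ ω ≤ (c : EReal) :=
      h1.trans (EReal.coe_le_coe_iff.mpr (min_le_left _ _))
    have ht0 : (σ ω).toReal ≤ min c ((z : ℝ) / 2 ^ k) := ereal_toReal_le (hσ0 ω) h1
    have hgt : ((z : ℝ) - 1) / 2 ^ k < (σ ω).toReal := by
      by_contra hcon
      push_neg at hcon
      exact h2 (ereal_le_coe (hσ0 ω) hσc (le_min (ht0.trans (min_le_left _ _)) hcon))
    refine ⟨hσc, Int.ceil_eq_iff.mpr ⟨?_, ?_⟩⟩
    · rw [div_lt_iff₀ h2k] at hgt; linarith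
    · have := ht0.trans (min_le_right _ _)
      rw [le_div_iff₀ h2k] at this; linarith
  · rintro ⟨hσc, hz⟩
    rw [Int.ceil_eq_iff] at hz
    obtain ⟨hz1, hz2⟩ := hz
    have ht0c := ereal_toReal_le (hσ0 ω) hσc
    constructor
    · exact ereal_le_coe (hσ0 ω) hσc (le_min ht0c ((le_div_iff₀ h2k).mpr hz2))
    · intro hcon
      have h' := (ereal_toReal_le (hσ0 ω) hcon).trans (min_le_right _ _)
      rw [le_div_iff₀ h2k] at h'
      linarith

private lemma approx_meas [BorelSpace E] (F : Filtration ℝ mΩ) {X : ℝ → Ω → E}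
    (hAdapted : AdaptedProc F X) {σ : Ω → EReal} (hσST : IsStoppingTimeE F σ)
    (hσ0 : ∀ ω, (0 : EReal) ≤ σ ω) {c : ℝ} (hc : 0 ≤ c) (k : ℕ) :
    Measurable[F (c + ((2 : ℝ) ^ k)⁻¹)]
      (fun ω => if σ ω ≤ (c : EReal) then X ((⌈(σ ω).toReal * 2 ^ k⌉ : ℤ) / (2 : ℝ) ^ k) ω
        else 0) := by
  classical
  have h2k : (0 : ℝ) < 2 ^ k := by positivity
  intro B hB
  have hpre : (fun ω => if σ ω ≤ (c : EReal) then
        X ((⌈(σ ω).toReal * 2 ^ k⌉ : ℤ) / (2 : ℝ) ^ k) ω else 0) ⁻¹' B =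
      ((if (0 : E) ∈ B then {ω | ¬ σ ω ≤ (c : EReal)} else ∅)) ∪
      ⋃ z : ℤ, (({ω | σ ω ≤ ((min c ((z : ℝ) / 2 ^ k) : ℝ) : EReal)} \
          {ω | σ ω ≤ ((min c (((z : ℝ) - 1) / 2 ^ k) : ℝ) : EReal)}) ∩
        (X ((z : ℝ) / 2 ^ k)) ⁻¹' B) := by
    ext ω
    simp only [mem_preimage, mem_union, mem_iUnion, mem_inter_iff, mem_diff, mem_setOf_eq]
    constructor
    · intro hmem
      by_cases hσc : σ ω ≤ (c : EReal)
      · rw [if_pos hσc] at hmem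
        refine Or.inr ⟨⌈(σ ω).toReal * 2 ^ k⌉, ?_, hmem⟩
        exact az_iff hσ0 |>.mpr ⟨hσc, rfl⟩
      · rw [if_neg hσc] at hmem
        left
        rw [if_pos hmem]
        exact hσc
    · rintro (hmem | ⟨z, hz, hXB⟩)
      · split_ifs at hmem with h0B
        · rw [if_neg hmem]; exact h0B
        · exact absurd hmem (notMem_empty ω)
      · obtain ⟨hσc, hzz⟩ := az_iff hσ0 |>.mp hz
        rw [if_pos hσc, hzz]
        exact hXB
  rw [hpre]
  apply MeasurableSet.union
  · split_ifs with h0B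
    · have : {ω | ¬ σ ω ≤ (c : EReal)} = {ω | σ ω ≤ (c : EReal)}ᶜ := rfl
      rw [this]
      exact F.mono (le_add_of_nonneg_right (by positivity)) _ ((hσST c).compl)
    · exact @MeasurableSet.empty Ω (F (c + ((2 : ℝ) ^ k)⁻¹))
  · apply MeasurableSet.iUnion
    intro z
    by_cases hz : 0 ≤ z ∧ (z : ℝ) / 2 ^ k ≤ c + ((2 : ℝ) ^ k)⁻¹
    · apply MeasurableSet.inter
      · apply MeasurableSet.diff
        · exact F.mono ((min_le_left _ _).trans (le_add_of_nonneg_right (by positivity))) _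
            (hσST _)
        · exact F.mono ((min_le_left _ _).trans (le_add_of_nonneg_right (by positivity))) _
            (hσST _)
      · have hznn : (0 : ℝ) ≤ (z : ℝ) / 2 ^ k := by
          apply div_nonneg _ (le_of_lt h2k)
          exact_mod_cast hz.1
        exact F.mono hz.2 _ ((hAdapted _ hznn).measurable hB)
    · have hempty : ({ω | σ ω ≤ ((min c ((z : ℝ) / 2 ^ k) : ℝ) : EReal)} \
          {ω | σ ω ≤ ((min c (((z : ℝ) - 1) / 2 ^ k) : ℝ) : EReal)}) ∩
          (X ((z : ℝ) / 2 ^ k)) ⁻¹' B = ∅ := by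
        rw [eq_empty_iff_forall_notMem]
        rintro ω ⟨⟨h1, h2⟩, _⟩
        obtain ⟨hσc, hzz⟩ := az_iff hσ0 |>.mp ⟨h1, h2⟩
        apply hz
        have ht00 : 0 ≤ (σ ω).toReal := ereal_toReal_nonneg' (hσ0 ω) hσc
        have ht0c : (σ ω).toReal ≤ c := ereal_toReal_le (hσ0 ω) hσc
        constructor
        · rw [← hzz]
          exact Int.ceil_nonneg (by positivity)
        · have h1' : (z : ℝ) < (σ ω).toReal * 2 ^ k + 1 := by
            rw [← hzz]; exact Int.ceil_lt_add_one _
          rw [div_le_iff₀ h2k]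
          have : c * 2 ^ k + 1 ≤ (c + ((2 : ℝ) ^ k)⁻¹) * 2 ^ k := by
            field_simp
            exact le_refl _
          nlinarith
      rw [hempty]
      exact @MeasurableSet.empty Ω (F (c + ((2 : ℝ) ^ k)⁻¹))

open scoped Topology in
private lemma stoppedVal_meas [BorelSpace E] (F : Filtration ℝ mΩ)
    (hF : ∀ t : ℝ, (F t : MeasurableSpace Ω) = ⨅ s : Ioi t, F (s : ℝ))
    {X : ℝ → Ω → E} (hAdapted : AdaptedProc F X) (hRC : RightContinuousPaths X)
    {σ : Ω → EReal} (hσST : IsStoppingTimeE F σ) (hσ0 : ∀ ω, (0 : EReal) ≤ σ ω)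
    {c : ℝ} (hc : 0 ≤ c) :
    Measurable[F c] (fun ω => if σ ω ≤ (c : EReal) then X (σ ω).toReal ω else 0) := by
  have key : ∀ s : ℝ, c < s →
      Measurable[F s] (fun ω => if σ ω ≤ (c : EReal) then X (σ ω).toReal ω else 0) := by
    intro s hs
    obtain ⟨k0, hk0⟩ := exists_pow_lt_of_lt_one (sub_pos.mpr hs) (by norm_num : (1 : ℝ) / 2 < 1)
    have hk0' : ((2 : ℝ) ^ k0)⁻¹ < s - c := by
      rwa [div_pow, one_pow, one_div] at hk0
    have hmeas : ∀ k : ℕ, Measurable[F s]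
        (fun ω => if σ ω ≤ (c : EReal) then
          X ((⌈(σ ω).toReal * 2 ^ (k0 + k)⌉ : ℤ) / (2 : ℝ) ^ (k0 + k)) ω else 0) := by
      intro k
      have hle : c + ((2 : ℝ) ^ (k0 + k))⁻¹ ≤ s := by
        have h1 : ((2 : ℝ) ^ (k0 + k))⁻¹ ≤ ((2 : ℝ) ^ k0)⁻¹ := by
          apply inv_anti₀ (by positivity)
          exact pow_le_pow_right₀ one_le_two (Nat.le_add_right _ _)
        linarith
      exact fun B hB => F.mono hle _ (approx_meas F hAdapted hσST hσ0 hc (k0 + k) hB)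
    refine @measurable_of_tendsto_metrizable Ω E (F s) _ _ _ _ _ _ hmeas ?_
    rw [tendsto_pi_nhds]
    intro ω
    by_cases hσc : σ ω ≤ (c : EReal)
    · simp only [if_pos hσc]
      set t0 := (σ ω).toReal with ht0
      have ht00 : 0 ≤ t0 := ereal_toReal_nonneg' (hσ0 ω) hσc
      have hd_ge : ∀ j : ℕ, t0 ≤ (⌈t0 * 2 ^ j⌉ : ℝ) / 2 ^ j := by
        intro j
        rw [le_div_iff₀ (by positivity : (0:ℝ) < 2 ^ j)]
        exact Int.le_ceil _
      have hd_le : ∀ k : ℕ, (⌈t0 * 2 ^ (k0 + k)⌉ : ℝ) / 2 ^ (k0 + k) ≤ t0 + (1 / 2 : ℝ) ^ k := by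
        intro k
        rw [div_le_iff₀ (by positivity : (0:ℝ) < 2 ^ (k0 + k))]
        have h1 : (⌈t0 * 2 ^ (k0 + k)⌉ : ℝ) < t0 * 2 ^ (k0 + k) + 1 := Int.ceil_lt_add_one _
        have hcalc : (1 / 2 : ℝ) ^ k * 2 ^ (k0 + k) = 2 ^ k0 := by
          rw [pow_add, div_pow, one_pow]
          field_simp
        have h2 : (1 : ℝ) ≤ (1 / 2 : ℝ) ^ k * 2 ^ (k0 + k) := by
          rw [hcalc]
          exact one_le_pow₀ one_le_two
        nlinarith
      have hdt : Tendsto (fun k : ℕ => (⌈t0 * 2 ^ (k0 + k)⌉ : ℝ) / 2 ^ (k0 + k)) atTop (𝓝 t0) := by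
        refine tendsto_of_tendsto_of_tendsto_of_le_of_le (g := fun _ => t0)
          (h := fun k => t0 + (1 / 2 : ℝ) ^ k) tendsto_const_nhds ?_
          (fun k => hd_ge (k0 + k)) hd_le
        have h := tendsto_pow_atTop_nhds_zero_of_lt_one (by norm_num : (0:ℝ) ≤ 1/2)
          (by norm_num : (1/2 : ℝ) < 1)
        simpa using h.const_add t0
      have hwithin : Tendsto (fun k : ℕ => (⌈t0 * 2 ^ (k0 + k)⌉ : ℝ) / 2 ^ (k0 + k)) atTop
          (𝓝[Ici t0] t0) :=
        tendsto_nhdsWithin_of_tendsto_nhds_of_eventually_within _ hdt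
          (Eventually.of_forall fun k => hd_ge (k0 + k))
      have hXtends := (hRC ω t0).tendsto.comp hwithin
      simpa [Function.comp_def] using hXtends
    · simp only [if_neg hσc]
      exact tendsto_const_nhds
  intro B hB
  rw [hF c]
  exact MeasurableSpace.measurableSet_iInf.mpr fun s => key s.1 s.2 hB

private lemma coe_min_iff {σ : Ω → EReal} {ω : Ω} {q r : ℝ} :
    σ ω ≤ ((min q r : ℝ) : EReal) ↔ σ ω ≤ (q : EReal) ∧ σ ω ≤ (r : EReal) := by
  constructor
  · intro h
    exact ⟨h.trans (EReal.coe_le_coe_iff.mpr (min_le_left _ _)),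
      h.trans (EReal.coe_le_coe_iff.mpr (min_le_right _ _))⟩
  · rintro ⟨h1, h2⟩
    rcases le_total q r with h | h
    · rwa [min_eq_left h]
    · rwa [min_eq_right h]

private lemma Sset_meas [BorelSpace E] [SecondCountableTopology E] (F : Filtration ℝ mΩ)
    (hF : ∀ t : ℝ, (F t : MeasurableSpace Ω) = ⨅ s : Ioi t, F (s : ℝ))
    {X : ℝ → Ω → E} (hAdapted : AdaptedProc F X) (hRC : RightContinuousPaths X)
    {σ : Ω → EReal} (hσST : IsStoppingTimeE F σ) (hσ0 : ∀ ω, (0 : EReal) ≤ σ ω)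
    {H : Ω → E} (hH : MeasurableAtTime F σ H) (a : ℝ) (m : ℕ) {q : ℚ} (hq : (0 : ℝ) ≤ (q : ℝ)) :
    MeasurableSet[F (q : ℝ)] {ω | q ∈ gainSet X σ H a m ω} := by
  classical
  set c : ℝ := min (q : ℝ) (m : ℝ) with hc_def
  have hc : 0 ≤ c := le_min hq (Nat.cast_nonneg m)
  have hcq : c ≤ (q : ℝ) := min_le_left _ _
  set Hc : Ω → E := fun ω => if σ ω ≤ (c : EReal) then H ω else 0 with hHc_def
  set Yc : Ω → E := fun ω => if σ ω ≤ (c : EReal) then X (σ ω).toReal ω else 0 with hYc_def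
  have hHc : Measurable[F c] Hc := by
    intro B hB
    by_cases h0B : (0 : E) ∈ B
    · have : Hc ⁻¹' B = (H ⁻¹' B ∩ {ω | σ ω ≤ (c : EReal)}) ∪ {ω | σ ω ≤ (c : EReal)}ᶜ := by
        ext ω
        simp only [hHc_def, mem_preimage, mem_union, mem_inter_iff, mem_setOf_eq, mem_compl_iff]
        by_cases hσc : σ ω ≤ (c : EReal)
        · simp [if_pos hσc, hσc]
        · simp [if_neg hσc, hσc, h0B]
      rw [this]
      exact (hH B hB c).union ((hσST c).compl)
    · have : Hc ⁻¹' B = H ⁻¹' B ∩ {ω | σ ω ≤ (c : EReal)} := by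
        ext ω
        simp only [hHc_def, mem_preimage, mem_inter_iff, mem_setOf_eq]
        by_cases hσc : σ ω ≤ (c : EReal)
        · simp [if_pos hσc, hσc]
        · simp [if_neg hσc, hσc, h0B]
      rw [this]
      exact hH B hB c
  have hYc : Measurable[F c] Yc := stoppedVal_meas F hF hAdapted hRC hσST hσ0 hc
  have hW : Measurable[F (q : ℝ)] (fun ω => ⟪Hc ω, X (q : ℝ) ω - Yc ω⟫) := by
    refine Measurable.inner ?_ ?_
    · exact hHc.mono (F.mono hcq) le_rfl
    · exact ((hAdapted (q : ℝ) hq).measurable).sub (hYc.mono (F.mono hcq) le_rfl)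
  have hset : {ω | q ∈ gainSet X σ H a m ω} =
      {ω | σ ω ≤ (c : EReal)} ∩ (fun ω => ⟪Hc ω, X (q : ℝ) ω - Yc ω⟫) ⁻¹' (Ioi a) := by
    ext ω
    simp only [gainSet, mem_setOf_eq, mem_inter_iff, mem_preimage, mem_Ioi, hc_def, coe_min_iff]
    constructor
    · rintro ⟨h1, h2, h3⟩
      have hσc : σ ω ≤ ((min (q : ℝ) (m : ℝ) : ℝ) : EReal) := coe_min_iff.mpr ⟨h1, h2⟩
      refine ⟨⟨h1, h2⟩, ?_⟩
      simp only [hHc_def, hYc_def, hc_def, if_pos hσc]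
      exact h3
    · rintro ⟨⟨h1, h2⟩, h3⟩
      have hσc : σ ω ≤ ((min (q : ℝ) (m : ℝ) : ℝ) : EReal) := coe_min_iff.mpr ⟨h1, h2⟩
      refine ⟨h1, h2, ?_⟩
      simpa only [hHc_def, hYc_def, hc_def, if_pos hσc] using h3
  rw [hset]
  exact (F.mono hcq _ (hσST c)).inter (hW measurableSet_Ioi)

private lemma sellTime_lt_meas [BorelSpace E] [SecondCountableTopology E]
    (P : Measure Ω) (F : Filtration ℝ mΩ)
    (hF : ∀ t : ℝ, (F t : MeasurableSpace Ω) = ⨅ s : Ioi t, F (s : ℝ))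
    (hN : ∀ t : ℝ, ∀ N : Set Ω, P N = 0 → MeasurableSet[F t] N)
    {X : ℝ → Ω → E} (hAdapted : AdaptedProc F X) (hRC : RightContinuousPaths X)
    {σ : Ω → EReal} (hσST : IsStoppingTimeE F σ) (hσ0 : ∀ ω, (0 : EReal) ≤ σ ω)
    {H : Ω → E} (hH : MeasurableAtTime F σ H) (a : ℝ) (m : ℕ)
    (hNnull : P {ω | σ ω ≤ ((m : ℝ) : EReal) ∧ ¬ (gainSet X σ H a m ω).Nonempty} = 0)
    (t : ℝ) :
    MeasurableSet[F t] {ω | sellTime X σ H a m ω < t} := by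
  classical
  set N : Set Ω := {ω | σ ω ≤ ((m : ℝ) : EReal) ∧ ¬ (gainSet X σ H a m ω).Nonempty} with hN_def
  have hdecomp : {ω | sellTime X σ H a m ω < t} =
      (⋃ q : ℚ, ⋃ (_ : (q : ℝ) < t), {ω | q ∈ gainSet X σ H a m ω}) ∪
      (({ω | σ ω ≤ ((m : ℝ) : EReal)}ᶜ ∩ {ω | (m : ℝ) < t}) ∪
        (N ∩ {ω | buyTime σ m ω < t})) := by
    ext ω
    simp only [mem_setOf_eq, mem_union, mem_iUnion, mem_inter_iff, mem_compl_iff, hN_def]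
    constructor
    · intro hlt
      by_cases hNE : (gainSet X σ H a m ω).Nonempty
      · left
        rw [sellTime, if_pos hNE] at hlt
        obtain ⟨x, ⟨p, hp, rfl⟩, hx⟩ :=
          (csInf_lt_iff (gainSet_bddBelow hσ0 ω) (hNE.image _)).mp hlt
        exact ⟨p, hx, hp⟩
      · right
        rw [sellTime, if_neg hNE] at hlt
        by_cases hσm : σ ω ≤ ((m : ℝ) : EReal)
        · exact Or.inr ⟨⟨hσm, hNE⟩, hlt⟩
        · refine Or.inl ⟨hσm, ?_⟩
          rw [buyTime, if_neg hσm] at hlt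
          exact hlt
    · rintro (⟨q, hqt, hq⟩ | (⟨hσm, hmt⟩ | ⟨⟨hσm, hNE⟩, hlt⟩))
      · have hNE : (gainSet X σ H a m ω).Nonempty := ⟨q, hq⟩
        rw [sellTime, if_pos hNE]
        exact lt_of_le_of_lt (csInf_le (gainSet_bddBelow hσ0 ω) ⟨q, hq, rfl⟩) hqt
      · have hNE : ¬ (gainSet X σ H a m ω).Nonempty := by
          rintro ⟨q, hq⟩
          exact hσm hq.2.1
        rw [sellTime, if_neg hNE, buyTime, if_neg hσm]
        exact hmt
      · rw [sellTime, if_neg hNE]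
        exact hlt
  rw [hdecomp]
  apply MeasurableSet.union
  · apply MeasurableSet.iUnion
    intro q
    apply MeasurableSet.iUnion
    intro hqt
    by_cases hq0 : (0 : ℝ) ≤ (q : ℝ)
    · exact F.mono (le_of_lt hqt) _ (Sset_meas F hF hAdapted hRC hσST hσ0 hH a m hq0)
    · have : {ω | q ∈ gainSet X σ H a m ω} = ∅ := by
        rw [eq_empty_iff_forall_notMem]
        intro ω hq
        exact hq0 (gainSet_q_nonneg hσ0 hq)
      rw [this]
      exact @MeasurableSet.empty Ω (F t)
  · apply MeasurableSet.union
    · by_cases hmt : (m : ℝ) < t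
      · have : {ω | σ ω ≤ ((m : ℝ) : EReal)}ᶜ ∩ {ω | (m : ℝ) < t} =
            {ω | σ ω ≤ ((m : ℝ) : EReal)}ᶜ := by
          ext ω; simp [hmt]
        rw [this]
        exact F.mono (le_of_lt hmt) _ ((hσST m).compl)
      · have : {ω | σ ω ≤ ((m : ℝ) : EReal)}ᶜ ∩ {ω | (m : ℝ) < t} = ∅ := by
          ext ω; simp [hmt]
        rw [this]
        exact @MeasurableSet.empty Ω (F t)
    · exact hN t _ (measure_mono_null inter_subset_left hNnull)

private lemma sellTime_isStoppingTime [BorelSpace E] [SecondCountableTopology E]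
    (P : Measure Ω) (F : Filtration ℝ mΩ)
    (hF : ∀ t : ℝ, (F t : MeasurableSpace Ω) = ⨅ s : Ioi t, F (s : ℝ))
    (hN : ∀ t : ℝ, ∀ N : Set Ω, P N = 0 → MeasurableSet[F t] N)
    {X : ℝ → Ω → E} (hAdapted : AdaptedProc F X) (hRC : RightContinuousPaths X)
    {σ : Ω → EReal} (hσST : IsStoppingTimeE F σ) (hσ0 : ∀ ω, (0 : EReal) ≤ σ ω)
    {H : Ω → E} (hH : MeasurableAtTime F σ H) (a : ℝ) (m : ℕ)
    (hNnull : P {ω | σ ω ≤ ((m : ℝ) : EReal) ∧ ¬ (gainSet X σ H a m ω).Nonempty} = 0) :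
    IsStoppingTime F (fun ω => ((sellTime X σ H a m ω : ℝ) : WithTop ℝ)) := by
  intro t
  simp only [WithTop.coe_le_coe]
  have key : ∀ s : ℝ, t < s → MeasurableSet[F s] {ω | sellTime X σ H a m ω ≤ t} := by
    intro s hs
    have hiter : {ω | sellTime X σ H a m ω ≤ t} =
        ⋂ n : ℕ, {ω | sellTime X σ H a m ω < min s (t + 1 / (n + 1))} := by
      ext ω
      simp only [mem_setOf_eq, mem_iInter]
      constructor
      · intro h n
        refine lt_min (lt_of_le_of_lt h hs) (lt_of_le_of_lt h ?_)
        have : (0 : ℝ) < 1 / (n + 1) := by positivity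
        linarith
      · intro h
        by_contra hcon
        push_neg at hcon
        obtain ⟨n, hn⟩ := exists_nat_one_div_lt (sub_pos.mpr hcon)
        have := (h n).trans_le (min_le_right _ _)
        have hn' : (1 : ℝ) / (n + 1) < sellTime X σ H a m ω - t := by exact_mod_cast hn
        linarith
    rw [hiter]
    refine MeasurableSet.iInter fun n => ?_
    exact F.mono (min_le_left s _) _
      (sellTime_lt_meas P F hF hN hAdapted hRC hσST hσ0 hH a m hNnull _)
  rw [hF t]
  exact MeasurableSpace.measurableSet_iInf.mpr fun s => key s.1 s.2

open scoped Topology in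
private lemma sell_gain {X : ℝ → Ω → E} (hRC : RightContinuousPaths X) {σ : Ω → EReal}
    (hσ0 : ∀ ω, (0 : EReal) ≤ σ ω) {H : Ω → E} {a : ℝ} {m : ℕ} {ω : Ω}
    (hNE : (gainSet X σ H a m ω).Nonempty) :
    a ≤ ⟪H ω, X (sellTime X σ H a m ω) ω - X (σ ω).toReal ω⟫ := by
  classical
  set S : Set ℝ := (fun q : ℚ => (q : ℝ)) '' gainSet X σ H a m ω with hS_def
  have hSne : S.Nonempty := hNE.image _
  have hbdd : BddBelow S := gainSet_bddBelow hσ0 ω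
  set T : ℝ := sInf S with hT_def
  have hsell : sellTime X σ H a m ω = T := by rw [sellTime, if_pos hNE]
  have hq : ∀ n : ℕ, ∃ q ∈ gainSet X σ H a m ω, (q : ℝ) < T + 1 / (n + 1) := by
    intro n
    have hlt : T < T + 1 / (n + 1) := by
      have : (0 : ℝ) < 1 / (n + 1) := by positivity
      linarith
    obtain ⟨x, ⟨p, hp, rfl⟩, hx⟩ := (csInf_lt_iff hbdd hSne).mp hlt
    exact ⟨p, hp, hx⟩
  choose qs hqs1 hqs2 using hq
  have hge : ∀ n, T ≤ (qs n : ℝ) := fun n => csInf_le hbdd ⟨qs n, hqs1 n, rfl⟩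
  have hupper : Tendsto (fun n : ℕ => T + 1 / ((n : ℝ) + 1)) atTop (𝓝 T) := by
    have h := tendsto_one_div_add_atTop_nhds_zero_nat (𝕜 := ℝ)
    simpa using h.const_add T
  have hT : Tendsto (fun n => ((qs n : ℝ))) atTop (𝓝 T) :=
    tendsto_of_tendsto_of_tendsto_of_le_of_le tendsto_const_nhds hupper
      (fun n => hge n) (fun n => (hqs2 n).le)
  have hwithin : Tendsto (fun n => ((qs n : ℝ))) atTop (𝓝[Ici T] T) :=
    tendsto_nhdsWithin_of_tendsto_nhds_of_eventually_within _ hT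
      (Eventually.of_forall fun n => hge n)
  have hXtends : Tendsto (fun n => X ((qs n : ℝ)) ω) atTop (𝓝 (X T ω)) :=
    (hRC ω T).tendsto.comp hwithin
  have hcont : Continuous (fun v : E => ⟪H ω, v - X (σ ω).toReal ω⟫) :=
    continuous_const.inner (continuous_id.sub continuous_const)
  have hlim : Tendsto (fun n => ⟪H ω, X ((qs n : ℝ)) ω - X (σ ω).toReal ω⟫) atTop
      (𝓝 (⟪H ω, X T ω - X (σ ω).toReal ω⟫)) := (hcont.tendsto _).comp hXtends
  rw [hsell]
  exact ge_of_tendsto' hlim fun n => (hqs1 n).2.2.le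

open scoped Topology in
private lemma gainSet_nonempty {X : ℝ → Ω → E} (hRC : RightContinuousPaths X)
    {σ : Ω → EReal} {H : Ω → E} {ε : ℝ} (hε : 0 < ε) {m : ℕ} {ω : Ω}
    (hσm : σ ω ≤ ((m : ℝ) : EReal))
    (hw : ∃ t : ℝ, σ ω ≤ (t : EReal) ∧ ε / 2 < ⟪H ω, X t ω - X (σ ω).toReal ω⟫) :
    (gainSet X σ H (ε / 2) m ω).Nonempty := by
  obtain ⟨t, hσt, hgt⟩ := hw
  have hc : ContinuousWithinAt (fun s => ⟪H ω, X s ω - X (σ ω).toReal ω⟫) (Ici t) t := by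
    have hcont : Continuous (fun v : E => ⟪H ω, v - X (σ ω).toReal ω⟫) :=
      continuous_const.inner (continuous_id.sub continuous_const)
    exact hcont.continuousAt.comp_continuousWithinAt (hRC ω t)
  have hev : (fun s => ⟪H ω, X s ω - X (σ ω).toReal ω⟫) ⁻¹' (Ioi (ε / 2)) ∈ 𝓝[Ici t] t :=
    hc (Ioi_mem_nhds hgt)
  rw [mem_nhdsGE_iff_exists_Ico_subset] at hev
  obtain ⟨u, hu, hsub⟩ := hev
  obtain ⟨q, hq1, hq2⟩ := exists_rat_btwn (mem_Ioi.mp hu)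
  refine ⟨q, ?_, hσm, ?_⟩
  · exact hσt.trans (EReal.coe_le_coe_iff.mpr hq1.le)
  · exact hsub ⟨le_of_lt hq1, hq2⟩

private lemma measAtTime_zero (F : Filtration ℝ mΩ) :
    MeasurableAtTime F (fun _ : Ω => ((0 : ℝ) : EReal)) (fun _ : Ω => (0 : E)) := by
  intro B hB t
  rcases em ((0 : E) ∈ B) with h0B | h0B <;>
    rcases em ((0 : ℝ) ≤ t) with h0t | h0t
  · have h : (fun _ : Ω => (0 : E)) ⁻¹' B ∩ {ω | ((0 : ℝ) : EReal) ≤ (t : EReal)} = univ := by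
      ext ω; simp [h0B, h0t, EReal.coe_le_coe_iff]
    rw [h]; exact @MeasurableSet.univ Ω (F t)
  · have h : (fun _ : Ω => (0 : E)) ⁻¹' B ∩ {ω | ((0 : ℝ) : EReal) ≤ (t : EReal)} = ∅ := by
      ext ω; simp [h0B, h0t, EReal.coe_le_coe_iff]
    rw [h]; exact @MeasurableSet.empty Ω (F t)
  · have h : (fun _ : Ω => (0 : E)) ⁻¹' B ∩ {ω | ((0 : ℝ) : EReal) ≤ (t : EReal)} = ∅ := by
      ext ω; simp [h0B, h0t, EReal.coe_le_coe_iff]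
    rw [h]; exact @MeasurableSet.empty Ω (F t)
  · have h : (fun _ : Ω => (0 : E)) ⁻¹' B ∩ {ω | ((0 : ℝ) : EReal) ≤ (t : EReal)} = ∅ := by
      ext ω; simp [h0B, h0t, EReal.coe_le_coe_iff]
    rw [h]; exact @MeasurableSet.empty Ω (F t)

private lemma phi_measAtTime (F : Filtration ℝ mΩ) {σ : Ω → EReal}
    (hσST : IsStoppingTimeE F σ) (hσ0 : ∀ ω, (0 : EReal) ≤ σ ω)
    {H : Ω → E} (hH : MeasurableAtTime F σ H) (m : ℕ) :
    MeasurableAtTime F (fun ω => ((buyTime σ m ω : ℝ) : EReal))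
      (fun ω => if σ ω ≤ ((m : ℝ) : EReal) then H ω else 0) := by
  classical
  intro B hB t
  by_cases h0B : (0 : E) ∈ B
  · have hset : (fun ω => if σ ω ≤ ((m : ℝ) : EReal) then H ω else 0) ⁻¹' B ∩
        {ω | ((buyTime σ m ω : ℝ) : EReal) ≤ (t : EReal)} =
        (H ⁻¹' B ∩ {ω | σ ω ≤ ((min t (m : ℝ) : ℝ) : EReal)}) ∪
        ({ω | σ ω ≤ ((m : ℝ) : EReal)}ᶜ ∩ {ω | (m : ℝ) ≤ t}) := by
      ext ω
      simp only [mem_inter_iff, mem_preimage, mem_setOf_eq, mem_union, mem_compl_iff,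
        EReal.coe_le_coe_iff]
      by_cases hσm : σ ω ≤ ((m : ℝ) : EReal)
      · rw [if_pos hσm, buyTime, if_pos hσm]
        constructor
        · rintro ⟨hHB, hle⟩
          exact Or.inl ⟨hHB, coe_min_iff.mpr ⟨ereal_le_coe (hσ0 ω) hσm hle, hσm⟩⟩
        · rintro (⟨hHB, hle⟩ | ⟨hc, _⟩)
          · exact ⟨hHB, ereal_toReal_le (hσ0 ω) ((coe_min_iff.mp hle).1)⟩
          · exact absurd hσm hc
      · rw [if_neg hσm, buyTime, if_neg hσm]
        constructor
        · rintro ⟨_, hle⟩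
          exact Or.inr ⟨hσm, hle⟩
        · rintro (⟨_, hle⟩ | ⟨_, hle⟩)
          · exact absurd ((coe_min_iff.mp hle).2) hσm
          · exact ⟨h0B, hle⟩
    rw [hset]
    apply MeasurableSet.union
    · exact F.mono (min_le_left t (m : ℝ)) _ (hH B hB (min t (m : ℝ)))
    · by_cases hmt : (m : ℝ) ≤ t
      · have h : {ω | σ ω ≤ ((m : ℝ) : EReal)}ᶜ ∩ {ω | (m : ℝ) ≤ t} =
            {ω | σ ω ≤ ((m : ℝ) : EReal)}ᶜ := by
          ext ω; simp [hmt]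
        rw [h]; exact F.mono hmt _ ((hσST m).compl)
      · have h : {ω | σ ω ≤ ((m : ℝ) : EReal)}ᶜ ∩ {ω | (m : ℝ) ≤ t} = ∅ := by
          ext ω; simp [hmt]
        rw [h]; exact @MeasurableSet.empty Ω (F t)
  · have hset : (fun ω => if σ ω ≤ ((m : ℝ) : EReal) then H ω else 0) ⁻¹' B ∩
        {ω | ((buyTime σ m ω : ℝ) : EReal) ≤ (t : EReal)} =
        H ⁻¹' B ∩ {ω | σ ω ≤ ((min t (m : ℝ) : ℝ) : EReal)} := by
      ext ω
      simp only [mem_inter_iff, mem_preimage, mem_setOf_eq, EReal.coe_le_coe_iff]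
      by_cases hσm : σ ω ≤ ((m : ℝ) : EReal)
      · rw [if_pos hσm, buyTime, if_pos hσm]
        constructor
        · rintro ⟨hHB, hle⟩
          exact ⟨hHB, coe_min_iff.mpr ⟨ereal_le_coe (hσ0 ω) hσm hle, hσm⟩⟩
        · rintro ⟨hHB, hle⟩
          exact ⟨hHB, ereal_toReal_le (hσ0 ω) ((coe_min_iff.mp hle).1)⟩
      · rw [if_neg hσm, buyTime, if_neg hσm]
        constructor
        · rintro ⟨hc, _⟩
          exact absurd hc h0B
        · rintro ⟨_, hle⟩
          exact absurd ((coe_min_iff.mp hle).2) hσm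
    rw [hset]
    exact F.mono (min_le_left t (m : ℝ)) _ (hH B hB (min t (m : ℝ)))

/-- Proposition: obvious arbitrage. If the right-continuous adapted
`ℝ^D`-valued process `X` does not satisfy (NOA), then `X` admits a simple arbitrage. -/
theorem statement0 {Ω : Type*} {mΩ : MeasurableSpace Ω} (P : Measure Ω) [IsProbabilityMeasure P]
    (F : Filtration ℝ mΩ) (hUC : UsualConditions F P) (D : ℕ)
    (X : ℝ → Ω → EuclideanSpace ℝ (Fin D))
    (hAdapted : AdaptedProc F X) (hRC : RightContinuousPaths X)
    (hNOA : ¬ NOA F P X) :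
    ∃ Φ : SimpleStrategy F (EuclideanSpace ℝ (Fin D)), IsArbitrage P X Φ := by
  classical
  simp only [NOA] at hNOA
  push_neg at hNOA
  obtain ⟨σ, hσST, hσ0, hσfin, H, hHdir, ε, hε, hPA⟩ := hNOA
  have hH : MeasurableAtTime F σ H := hHdir.1
  set A : Set Ω := {ω | σ ω < ⊤} ∩
      {ω | ∃ δ : ℝ, δ < ε ∧ ∀ t : ℝ, σ ω ≤ (t : EReal) →
        ⟪H ω, X t ω - X (σ ω).toReal ω⟫ ≤ δ} with hA_def
  have hPA0 : P A = 0 := le_antisymm hPA zero_le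
  -- choose a horizon m with P(σ ≤ m) > 0
  have hm : ∃ m : ℕ, P {ω | σ ω ≤ ((m : ℝ) : EReal)} ≠ 0 := by
    by_contra hcon
    push_neg at hcon
    have hsub : {ω | σ ω < ⊤} ⊆ ⋃ m : ℕ, {ω | σ ω ≤ ((m : ℝ) : EReal)} := by
      intro ω hω
      obtain ⟨m, hmge⟩ := exists_nat_ge (σ ω).toReal
      refine mem_iUnion.mpr ⟨m, ?_⟩
      show σ ω ≤ ((m : ℝ) : EReal)
      rw [← EReal.coe_toReal (ne_of_lt hω) (ereal_ne_bot (hσ0 ω))]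
      exact EReal.coe_le_coe_iff.mpr hmge
    exact hσfin.ne' (measure_mono_null hsub (measure_iUnion_null fun m => hcon m))
  obtain ⟨m, hPm⟩ := hm
  -- pointwise: outside the null set A, σ ≤ m implies the gain set is nonempty
  have hkey : ∀ ω, ω ∉ A → σ ω ≤ ((m : ℝ) : EReal) →
      (gainSet X σ H (ε / 2) m ω).Nonempty := by
    intro ω hA hσm
    refine gainSet_nonempty hRC hε hσm ?_
    have hlt : σ ω < ⊤ := lt_of_le_of_lt hσm (EReal.coe_lt_top _)
    have h2 : ¬ ∃ δ : ℝ, δ < ε ∧ ∀ t : ℝ, σ ω ≤ (t : EReal) →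
        ⟪H ω, X t ω - X (σ ω).toReal ω⟫ ≤ δ := fun hex => hA ⟨hlt, hex⟩
    push_neg at h2
    obtain ⟨t, ht, hgt⟩ := h2 (ε / 2) (by linarith)
    exact ⟨t, ht, hgt⟩
  have hNnull : P {ω | σ ω ≤ ((m : ℝ) : EReal) ∧ ¬ (gainSet X σ H (ε / 2) m ω).Nonempty} = 0 := by
    refine measure_mono_null ?_ hPA0
    rintro ω ⟨h1, h2⟩
    by_contra hA
    exact h2 (hkey ω hA h1)
  -- the simple strategy
  set τ : ℕ → Ω → ℝ := fun j => if j = 0 then (fun _ => 0) else if j = 1 then buyTime σ m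
      else sellTime X σ H (ε / 2) m with hτ_def
  set φ : ℕ → Ω → EuclideanSpace ℝ (Fin D) := fun j ω =>
      if j = 1 ∧ σ ω ≤ ((m : ℝ) : EReal) then H ω else 0 with hφ_def
  have hτ0 : τ 0 = fun _ => 0 := by simp [hτ_def]
  have hτ1 : τ 1 = buyTime σ m := by simp [hτ_def]
  have hτ2 : τ 2 = sellTime X σ H (ε / 2) m := by simp [hτ_def]
  have hφ0 : φ 0 = fun _ => 0 := by funext ω; simp [hφ_def]
  have hφ1 : φ 1 = fun ω => if σ ω ≤ ((m : ℝ) : EReal) then H ω else 0 := by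
    funext ω; simp only [hφ_def, eq_self_iff_true, true_and]
  have hτz : ∀ ω, τ 0 ω = 0 := fun ω => by rw [hτ0]
  have hmono : ∀ j, j < 2 → ∀ ω, τ j ω ≤ τ (j + 1) ω := by
    intro j hj ω
    interval_cases j
    · rw [hτ0, hτ1]
      exact buyTime_nonneg hσ0 ω
    · rw [hτ1, hτ2]
      exact buyTime_le_sellTime hσ0 ω
  have hstop : ∀ j, j ≤ 2 → IsStoppingTime F (fun ω => ((τ j ω : ℝ) : WithTop ℝ)) := by
    intro j hj
    interval_cases j
    · rw [hτ0]; exact isStoppingTime_const F 0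
    · rw [hτ1]; exact buyTime_isStoppingTime F hσST hσ0 m
    · rw [hτ2]
      exact sellTime_isStoppingTime P F hUC.1 hUC.2 hAdapted hRC hσST hσ0 hH (ε / 2) m hNnull
  have hφmeas : ∀ j, j < 2 → MeasurableAtTime F (fun ω => ((τ j ω : ℝ) : EReal)) (φ j) := by
    intro j hj
    interval_cases j
    · rw [hτ0, hφ0]
      exact measAtTime_zero F
    · rw [hτ1, hφ1]
      exact phi_measAtTime F hσST hσ0 hH m
  let Φ0 : SimpleStrategy F (EuclideanSpace ℝ (Fin D)) := ⟨2, τ, φ, hτz, hmono, hstop, hφmeas⟩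
  have hWE : ∀ ω, wealthEnd X Φ0 ω =
      if σ ω ≤ ((m : ℝ) : EReal) then
        ⟪H ω, X (sellTime X σ H (ε / 2) m ω) ω - X (buyTime σ m ω) ω⟫ else 0 := by
    intro ω
    show (∑ j ∈ Finset.range 2, ⟪φ j ω, X (τ (j + 1) ω) ω - X (τ j ω) ω⟫) = _
    rw [Finset.sum_range_succ, Finset.sum_range_one]
    rw [hφ0, hφ1, hτ1, hτ2]
    simp only [inner_zero_left, zero_add]
    by_cases hσm : σ ω ≤ ((m : ℝ) : EReal)
    · rw [if_pos hσm, if_pos hσm]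
    · rw [if_neg hσm, if_neg hσm]
      exact inner_zero_left _
  have hnn : ∀ ω, 0 ≤ wealthEnd X Φ0 ω := by
    intro ω
    rw [hWE ω]
    by_cases hσm : σ ω ≤ ((m : ℝ) : EReal)
    · rw [if_pos hσm]
      by_cases hNE : (gainSet X σ H (ε / 2) m ω).Nonempty
      · have hg := sell_gain hRC hσ0 hNE
        have hbt : buyTime σ m ω = (σ ω).toReal := by rw [buyTime, if_pos hσm]
        rw [hbt]
        linarith
      · rw [sellTime, if_neg hNE]
        simp
    · rw [if_neg hσm]
  have hpos : ∀ ω, (gainSet X σ H (ε / 2) m ω).Nonempty → 0 < wealthEnd X Φ0 ω := by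
    intro ω hNE
    obtain ⟨q, hq⟩ := id hNE
    have hσm : σ ω ≤ ((m : ℝ) : EReal) := hq.2.1
    rw [hWE ω, if_pos hσm]
    have hg := sell_gain hRC hσ0 hNE
    have hbt : buyTime σ m ω = (σ ω).toReal := by rw [buyTime, if_pos hσm]
    rw [hbt]
    linarith
  refine ⟨Φ0, Eventually.of_forall hnn, ?_⟩
  rw [pos_iff_ne_zero]
  intro h0
  apply hPm
  have hsub : {ω | σ ω ≤ ((m : ℝ) : EReal)} ⊆ {ω | 0 < wealthEnd X Φ0 ω} ∪ A := by
    intro ω hσm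
    by_cases hA : ω ∈ A
    · exact Or.inr hA
    · exact Or.inl (hpos ω (hkey ω hA hσm))
  exact measure_mono_null hsub (measure_union_null h0 hPA0)

end SimpleArbitrage
end

section
/- Let X be a right-continuous adapted ℝ^D-valued process on a filtered probability space satisfying the usual conditions. If X satisfies the no obvious arbitrage condition (NOA), then every simple arbitrage for X is 0-admissible, i.e., its wealth process from initial capital 0 satisfies inf_{t∈[0,∞)} V_t(Φ;0) ≥ 0 P-almost surely. -/
open MeasureTheory ProbabilityTheory Filter Set
open scoped ENNReal NNReal RealInnerProductSpace

namespace SimpleArbitrage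

variable {Ω : Type*} {mΩ : MeasurableSpace Ω}
variable {E : Type*} [NormedAddCommGroup E] [InnerProductSpace ℝ E] [MeasurableSpace E]

section Aux

variable {Ω : Type*} {mΩ : MeasurableSpace Ω} {D : ℕ}
variable {F : Filtration ℝ mΩ} {X : ℝ → Ω → EuclideanSpace ℝ (Fin D)}

lemma tau_mono' (Φ : SimpleStrategy F (EuclideanSpace ℝ (Fin D))) {a b : ℕ} (hab : a ≤ b)
    (hb : b ≤ Φ.n) (ω : Ω) : Φ.τ a ω ≤ Φ.τ b ω := by
  induction b with
  | zero => simp_all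
  | succ m ih =>
    rcases Nat.eq_or_lt_of_le hab with h | h
    · exact le_of_eq (by rw [h])
    · exact (ih (by omega) (by omega)).trans (Φ.τ_mono m (by omega) ω)

lemma tau_nonneg (Φ : SimpleStrategy F (EuclideanSpace ℝ (Fin D))) {a : ℕ} (ha : a ≤ Φ.n)
    (ω : Ω) : 0 ≤ Φ.τ a ω := by
  have := tau_mono' Φ (Nat.zero_le a) ha ω
  rwa [Φ.τ_zero ω] at this

lemma stopped_tendsto (hRC : RightContinuousPaths X) (ω : Ω) (c t₀ : ℝ) :
    Tendsto (fun t => X (min t c) ω) (nhdsWithin t₀ (Ici t₀)) (nhds (X (min t₀ c) ω)) := by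
  have hmin : Tendsto (fun t => min t c) (nhdsWithin t₀ (Ici t₀))
      (nhdsWithin (min t₀ c) (Ici (min t₀ c))) := by
    apply tendsto_nhdsWithin_of_tendsto_nhds_of_eventually_within
    · exact ((continuous_id.min continuous_const).tendsto t₀).mono_left nhdsWithin_le_nhds
    · exact Filter.eventually_of_mem self_mem_nhdsWithin fun s hs => show min t₀ c ≤ min s c from min_le_min hs le_rfl
  exact (hRC ω (min t₀ c)).tendsto.comp hmin

lemma wealth_rightCont (hRC : RightContinuousPaths X)
    (Φ : SimpleStrategy F (EuclideanSpace ℝ (Fin D))) (ω : Ω) (t₀ : ℝ) :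
    Tendsto (fun t => wealth X Φ t ω) (nhdsWithin t₀ (Ici t₀)) (nhds (wealth X Φ t₀ ω)) := by
  unfold wealth
  apply tendsto_finset_sum
  intro i _
  exact Filter.Tendsto.inner tendsto_const_nhds
    ((stopped_tendsto hRC ω (Φ.τ (i+1) ω) t₀).sub (stopped_tendsto hRC ω (Φ.τ i ω) t₀))

lemma wealth_decomp (Φ : SimpleStrategy F (EuclideanSpace ℝ (Fin D))) {j : ℕ} (hj : j < Φ.n)
    {ω : Ω} {s t : ℝ} (hs : Φ.τ j ω ≤ s) (hst : s ≤ t) (ht : t ≤ Φ.τ (j+1) ω) :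
    wealth X Φ t ω = wealth X Φ s ω + ⟪Φ.φ j ω, X t ω - X s ω⟫ := by
  unfold wealth
  have key : ∀ i ∈ Finset.range Φ.n,
      ⟪Φ.φ i ω, X (min t (Φ.τ (i+1) ω)) ω - X (min t (Φ.τ i ω)) ω⟫ =
      ⟪Φ.φ i ω, X (min s (Φ.τ (i+1) ω)) ω - X (min s (Φ.τ i ω)) ω⟫ +
      (if i = j then ⟪Φ.φ j ω, X t ω - X s ω⟫ else 0) := by
    intro i hi
    rw [Finset.mem_range] at hi
    rcases lt_trichotomy i j with h | rfl | h
    · have h1 : Φ.τ (i+1) ω ≤ s := (tau_mono' Φ (by omega) (by omega) ω).trans hs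
      have h2 : Φ.τ i ω ≤ s := ((Φ.τ_mono i (by omega) ω).trans h1)
      rw [if_neg (by omega), add_zero, min_eq_right h1, min_eq_right (h1.trans hst),
        min_eq_right h2, min_eq_right (h2.trans hst)]
    · rw [if_pos rfl, min_eq_left ht, min_eq_left (hst.trans ht),
        min_eq_right (hs.trans hst), min_eq_right hs, ← inner_add_right]
      congr 1
      abel
    · have h1 : t ≤ Φ.τ i ω := ht.trans (tau_mono' Φ (by omega) (by omega) ω)
      have h2 : t ≤ Φ.τ (i+1) ω := h1.trans (Φ.τ_mono i (by omega) ω)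
      rw [if_neg (by omega), add_zero, min_eq_left h2, min_eq_left ((hst.trans h2)),
        min_eq_left h1, min_eq_left (hst.trans h1), sub_self, sub_self]
  rw [Finset.sum_congr rfl key, Finset.sum_add_distrib, Finset.sum_ite_eq' (Finset.range Φ.n) j,
    if_pos (Finset.mem_range.mpr hj)]

lemma wealth_tail (Φ : SimpleStrategy F (EuclideanSpace ℝ (Fin D))) {ω : Ω} {t : ℝ}
    (ht : Φ.τ Φ.n ω ≤ t) : wealth X Φ t ω = wealthEnd X Φ ω := by
  unfold wealth wealthEnd
  apply Finset.sum_congr rfl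
  intro i hi
  rw [Finset.mem_range] at hi
  rw [min_eq_right ((tau_mono' Φ (by omega) le_rfl ω).trans ht),
    min_eq_right ((tau_mono' Φ (by omega) le_rfl ω).trans ht)]

end Aux
section Aux2

variable {Ω : Type*} {mΩ : MeasurableSpace Ω} {D : ℕ}
variable {F : Filtration ℝ mΩ} {X : ℝ → Ω → EuclideanSpace ℝ (Fin D)}

/-- Measurability of the stopped process via dyadic approximation from the right. -/
lemma stopped_meas (hAd : AdaptedProc F X) (hRC : RightContinuousPaths X)
    {τ : Ω → ℝ} (hτ : IsStoppingTime F (fun ω => ((τ ω : ℝ) : WithTop ℝ))) (hτ0 : ∀ ω, 0 ≤ τ ω) {q : ℝ} (hq : 0 ≤ q) :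
    Measurable[F q] (fun ω => X (min q (τ ω)) ω) := by
  -- dyadic upper approximations
  set c : ℕ → ℝ → ℝ := fun m x => (⌈x * 2 ^ m⌉ : ℤ) / 2 ^ m with hc
  have hc_ge : ∀ m x, x ≤ c m x := by
    intro m x
    rw [hc]
    rw [le_div_iff₀ (by positivity)]
    exact Int.le_ceil _
  have hc_lt : ∀ m x, c m x < x + (1/2) ^ m := by
    intro m x
    rw [hc]
    have h2 : (0:ℝ) < 2 ^ m := by positivity
    rw [div_lt_iff₀ h2]
    calc ((⌈x * 2 ^ m⌉ : ℤ) : ℝ) < x * 2 ^ m + 1 := Int.ceil_lt_add_one _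
    _ = (x + (1/2)^m) * 2 ^ m := by
      rw [add_mul, ← mul_pow, one_div_mul_cancel (two_ne_zero), one_pow]
  set v : ℕ → Ω → ℝ := fun m ω => min q (c m (min (τ ω) q)) with hv
  have hv_meas : ∀ m, Measurable[F q] (v m) := by
    intro m
    have hbase : Measurable[F q] (fun ω => min (τ ω) q) := by
      have h := ((hτ.min_const q).measurable_of_le fun _ => min_le_right _ _).untopA
      convert h using 1
      funext ω
      rw [← WithTop.coe_min]
      rfl
    have houter : Measurable (fun x : ℝ => min q (c m x)) := by
      apply measurable_const.min
      exact ((measurable_from_top.comp Int.measurable_ceil).comp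
        (measurable_id.mul_const _)).div_const _
    exact houter.comp hbase
  have hv_mem : ∀ m ω, min q (τ ω) ≤ v m ω ∧ v m ω < min q (τ ω) + (1/2) ^ m ∧
      0 ≤ v m ω ∧ v m ω ≤ q := by
    intro m ω
    have h0 : 0 ≤ min (τ ω) q := le_min (hτ0 ω) hq
    have hcomm : min (τ ω) q = min q (τ ω) := min_comm _ _
    refine ⟨?_, ?_, ?_, min_le_left _ _⟩
    · rw [← hcomm]
      exact le_min (by rw [hcomm]; exact min_le_left _ _) (hc_ge m _)
    · calc v m ω ≤ c m (min (τ ω) q) := min_le_right _ _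
      _ < min (τ ω) q + (1/2)^m := hc_lt m _
      _ = min q (τ ω) + (1/2)^m := by rw [hcomm]
    · exact le_min hq ((h0).trans (hc_ge m _))
  -- each vₘ takes countably many values
  have hcount : ∀ m, (Set.range (v m)).Countable := by
    intro m
    have : Set.range (v m) ⊆ insert q (Set.range (fun k : ℤ => ((k:ℝ) / 2 ^ m))) := by
      rintro x ⟨ω, rfl⟩
      rcases min_cases q (c m (min (τ ω) q)) with ⟨h1, _⟩ | ⟨h1, _⟩
      · exact Set.mem_insert_iff.mpr (Or.inl h1)
      · exact Set.mem_insert_iff.mpr (Or.inr ⟨⌈min (τ ω) q * 2 ^ m⌉, h1.symm⟩)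
    exact Set.Countable.mono this ((Set.countable_range _).insert q)
  have hg_meas : ∀ m, Measurable[F q] (fun ω => X (v m ω) ω) := by
    intro m
    intro B hB
    have heq : (fun ω => X (v m ω) ω) ⁻¹' B =
        ⋃ r ∈ Set.range (v m), (v m ⁻¹' {r} ∩ {ω | X r ω ∈ B}) := by
      ext ω
      simp only [Set.mem_preimage, Set.mem_iUnion, Set.mem_inter_iff, Set.mem_setOf_eq,
        Set.mem_singleton_iff, Set.mem_range]
      constructor
      · intro h; exact ⟨v m ω, ⟨ω, rfl⟩, rfl, h⟩
      · rintro ⟨r, _, rfl, h⟩; exact h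
    rw [heq]
    apply MeasurableSet.biUnion (hcount m)
    rintro r ⟨ω₀, rfl⟩
    refine ((hv_meas m) (measurableSet_singleton _)).inter ?_
    have h1 := (hv_mem m ω₀).2.2.1
    have h2 := (hv_mem m ω₀).2.2.2
    have hXr : Measurable[F (v m ω₀)] (X (v m ω₀)) := (hAd _ h1).measurable
    exact F.mono h2 _ (hXr hB)
  have hlim : ∀ ω, Tendsto (fun m => X (v m ω) ω) atTop (nhds (X (min q (τ ω)) ω)) := by
    intro ω
    set u := min q (τ ω) with hu
    have hvt : Tendsto (fun m => v m ω) atTop (nhdsWithin u (Ici u)) := by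
      apply tendsto_nhdsWithin_of_tendsto_nhds_of_eventually_within
      · have hub : Tendsto (fun m : ℕ => u + (1/2:ℝ) ^ m) atTop (nhds u) := by
          have hpow : Tendsto (fun m : ℕ => (1/2:ℝ) ^ m) atTop (nhds 0) :=
            tendsto_pow_atTop_nhds_zero_of_lt_one (by norm_num) (by norm_num)
          simpa using ((tendsto_const_nhds : Tendsto (fun _ : ℕ => u) atTop (nhds u))).add hpow
        exact tendsto_of_tendsto_of_tendsto_of_le_of_le tendsto_const_nhds hub
          (fun m => (hv_mem m ω).1) (fun m => (hv_mem m ω).2.1.le)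
      · exact Filter.Eventually.of_forall fun m => (hv_mem m ω).1
    exact (hRC ω u).tendsto.comp hvt
  exact @measurable_of_tendsto_metrizable Ω (EuclideanSpace ℝ (Fin D)) (F q) _ _ _ _ _ _
    hg_meas (tendsto_pi_nhds.mpr hlim)

lemma phi_cutoff_meas (Φ : SimpleStrategy F (EuclideanSpace ℝ (Fin D))) {j : ℕ} (hj : j < Φ.n)
    (q : ℝ) :
    Measurable[F q] (fun ω => if Φ.τ j ω ≤ q then Φ.φ j ω else 0) := by
  intro B hB
  have hEset : {ω | ((Φ.τ j ω : ℝ) : EReal) ≤ ((q : ℝ) : EReal)} = {ω | Φ.τ j ω ≤ q} := by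
    ext ω; simp [EReal.coe_le_coe_iff]
  have h1 : MeasurableSet[F q] (Φ.φ j ⁻¹' B ∩ {ω | Φ.τ j ω ≤ q}) := by
    have := Φ.φ_meas j hj B hB q
    rwa [hEset] at this
  have hτq : MeasurableSet[F q] {ω | Φ.τ j ω ≤ q} := by
    simpa using Φ.τ_stopping j hj.le q
  by_cases h0 : (0 : EuclideanSpace ℝ (Fin D)) ∈ B
  · have : (fun ω => if Φ.τ j ω ≤ q then Φ.φ j ω else 0) ⁻¹' B =
        (Φ.φ j ⁻¹' B ∩ {ω | Φ.τ j ω ≤ q}) ∪ {ω | Φ.τ j ω ≤ q}ᶜ := by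
      ext ω
      by_cases hτ : Φ.τ j ω ≤ q <;> simp [hτ, h0]
    rw [this]; exact h1.union hτq.compl
  · have : (fun ω => if Φ.τ j ω ≤ q then Φ.φ j ω else 0) ⁻¹' B =
        (Φ.φ j ⁻¹' B ∩ {ω | Φ.τ j ω ≤ q}) := by
      ext ω
      by_cases hτ : Φ.τ j ω ≤ q <;> simp [hτ, h0]
    rw [this]; exact h1

lemma wealth_meas (hAd : AdaptedProc F X) (hRC : RightContinuousPaths X)
    (Φ : SimpleStrategy F (EuclideanSpace ℝ (Fin D))) {q : ℝ} (hq : 0 ≤ q) :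
    Measurable[F q] (wealth X Φ q) := by
  have heq : wealth X Φ q = fun ω => ∑ i ∈ Finset.range Φ.n,
      ⟪(if Φ.τ i ω ≤ q then Φ.φ i ω else 0),
        X (min q (Φ.τ (i+1) ω)) ω - X (min q (Φ.τ i ω)) ω⟫ := by
    funext ω
    unfold wealth
    apply Finset.sum_congr rfl
    intro i hi
    rw [Finset.mem_range] at hi
    by_cases hτ : Φ.τ i ω ≤ q
    · rw [if_pos hτ]
    · rw [if_neg hτ]
      push_neg at hτ
      rw [min_eq_left hτ.le, min_eq_left (hτ.le.trans (Φ.τ_mono i hi ω)), sub_self,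
        inner_zero_right, inner_zero_right]
  rw [heq]
  apply Finset.measurable_sum
  intro i hi
  rw [Finset.mem_range] at hi
  exact (phi_cutoff_meas Φ hi q).inner
    ((stopped_meas hAd hRC (Φ.τ_stopping (i+1) hi) (fun ω' => tau_nonneg Φ hi ω') hq).sub
     (stopped_meas hAd hRC (Φ.τ_stopping i hi.le) (fun ω' => tau_nonneg Φ hi.le ω') hq))

end Aux2
section Aux3

variable {Ω : Type*} {mΩ : MeasurableSpace Ω} {D : ℕ}
variable {F : Filtration ℝ mΩ} {X : ℝ → Ω → EuclideanSpace ℝ (Fin D)}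

/-- The set of rationals at which the wealth has dropped below `-η/2` (with portfolio bound). -/
def Aset (X : ℝ → Ω → EuclideanSpace ℝ (Fin D)) (Φ : SimpleStrategy F (EuclideanSpace ℝ (Fin D)))
    (j : ℕ) (η K : ℝ) (q' : ℚ) : Set Ω :=
  {ω | Φ.τ j ω ≤ (q' : ℝ) ∧ wealth X Φ (q' : ℝ) ω ≤ -(η/2) ∧ ‖Φ.φ j ω‖ ≤ K}

/-- The rational hitting time of the wealth drop. -/
noncomputable def sigmaT (X : ℝ → Ω → EuclideanSpace ℝ (Fin D))
    (Φ : SimpleStrategy F (EuclideanSpace ℝ (Fin D))) (j : ℕ) (η K : ℝ) : Ω → EReal :=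
  fun ω => sInf ((fun q' : ℚ => (((q' : ℝ) : EReal))) '' {q' | ω ∈ Aset X Φ j η K q'})

lemma sigma_ge (Φ : SimpleStrategy F (EuclideanSpace ℝ (Fin D))) (j : ℕ) (η K : ℝ) (ω : Ω) :
    ((Φ.τ j ω : ℝ) : EReal) ≤ sigmaT X Φ j η K ω := by
  apply le_sInf
  rintro a ⟨q', hq', rfl⟩
  exact EReal.coe_le_coe_iff.mpr hq'.1

lemma sigma_nonneg (Φ : SimpleStrategy F (EuclideanSpace ℝ (Fin D))) {j : ℕ} (hj : j ≤ Φ.n)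
    (η K : ℝ) (ω : Ω) : 0 ≤ sigmaT X Φ j η K ω := by
  refine le_trans ?_ (sigma_ge Φ j η K ω)
  exact_mod_cast EReal.coe_le_coe_iff.mpr (tau_nonneg Φ hj ω)

lemma sigma_le (Φ : SimpleStrategy F (EuclideanSpace ℝ (Fin D))) {j : ℕ} {η K : ℝ} {q' : ℚ}
    {ω : Ω} (h : ω ∈ Aset X Φ j η K q') : sigmaT X Φ j η K ω ≤ ((q' : ℝ) : EReal) :=
  sInf_le ⟨q', h, rfl⟩

lemma sigma_lt (Φ : SimpleStrategy F (EuclideanSpace ℝ (Fin D))) {j : ℕ} {η K : ℝ} {ω : Ω}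
    {b : EReal} (h : sigmaT X Φ j η K ω < b) :
    ∃ q' : ℚ, ω ∈ Aset X Φ j η K q' ∧ ((q' : ℝ) : EReal) < b := by
  obtain ⟨a, ⟨q', h', rfl⟩, hab⟩ := sInf_lt_iff.mp h
  exact ⟨q', h', hab⟩

lemma Aset_meas (hAd : AdaptedProc F X) (hRC : RightContinuousPaths X)
    (Φ : SimpleStrategy F (EuclideanSpace ℝ (Fin D))) {j : ℕ} (hj : j < Φ.n) {η K : ℝ}
    (q' : ℚ) {s : ℝ} (hq's : (q' : ℝ) ≤ s) : MeasurableSet[F s] (Aset X Φ j η K q') := by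
  by_cases hq0 : (0 : ℝ) ≤ (q' : ℝ)
  · have hmeas : MeasurableSet[F (q' : ℝ)] (Aset X Φ j η K q') := by
      have h1 : MeasurableSet[F (q' : ℝ)] {ω | Φ.τ j ω ≤ (q' : ℝ)} := by
          simpa using Φ.τ_stopping j hj.le (q' : ℝ)
      have h2 := wealth_meas hAd hRC Φ (X := X) hq0 (measurableSet_Iic (a := -(η/2)))
      have h3 : MeasurableSet[F (q' : ℝ)] (Φ.φ j ⁻¹' Metric.closedBall 0 K ∩
          {ω | ((Φ.τ j ω : ℝ) : EReal) ≤ (((q' : ℝ)) : EReal)}) :=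
        Φ.φ_meas j hj _ measurableSet_closedBall _
      have heq : Aset X Φ j η K q' =
          ({ω | Φ.τ j ω ≤ (q' : ℝ)} ∩ wealth X Φ (q' : ℝ) ⁻¹' Iic (-(η/2))) ∩
          (Φ.φ j ⁻¹' Metric.closedBall 0 K ∩
            {ω | ((Φ.τ j ω : ℝ) : EReal) ≤ (((q' : ℝ)) : EReal)}) := by
        ext ω
        simp only [Aset, Set.mem_inter_iff, Set.mem_setOf_eq, Set.mem_preimage,
          mem_closedBall_zero_iff, Set.mem_Iic, EReal.coe_le_coe_iff]
        tauto
      rw [heq]; exact (h1.inter h2).inter h3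
    exact F.mono hq's _ hmeas
  · have heq : Aset X Φ j η K q' = ∅ := by
      ext ω
      simp only [Aset, Set.mem_setOf_eq, Set.mem_empty_iff_false, iff_false, not_and]
      intro h1
      have h0 := tau_nonneg Φ hj.le ω
      push_neg at hq0
      exact absurd (h0.trans h1) (not_le.mpr hq0)
    rw [heq]; exact @MeasurableSet.empty Ω (F s)

lemma sigma_stopping
    (hUC1 : ∀ t : ℝ, (F t : MeasurableSpace Ω) = ⨅ s : Set.Ioi t, F (s : ℝ))
    (hAd : AdaptedProc F X) (hRC : RightContinuousPaths X)
    (Φ : SimpleStrategy F (EuclideanSpace ℝ (Fin D))) {j : ℕ} (hj : j < Φ.n) (η K : ℝ) :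
    IsStoppingTimeE F (sigmaT X Φ j η K) := by
  intro t
  set U : ℕ → Set Ω := fun m =>
    ⋃ q' ∈ {q' : ℚ | (q' : ℝ) < t + 1/((m:ℝ)+1)}, Aset X Φ j η K q' with hU
  have hU_anti : ∀ m m' : ℕ, m ≤ m' → U m' ⊆ U m := by
    intro m m' hmm'
    refine Set.iUnion₂_subset fun q' hq' => Set.subset_biUnion_of_mem ?_
    have hc : ((m:ℝ)+1) ≤ ((m':ℝ)+1) := by
      have := (Nat.cast_le (α := ℝ)).mpr hmm'; linarith
    have h2 : (1:ℝ)/((m':ℝ)+1) ≤ 1/((m:ℝ)+1) :=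
      one_div_le_one_div_of_le (by positivity) hc
    have h1 : (q' : ℝ) < t + 1/((m':ℝ)+1) := hq'
    show (q' : ℝ) < t + 1/((m:ℝ)+1)
    linarith
  have hT : {ω | sigmaT X Φ j η K ω ≤ (t : EReal)} = ⋂ m : ℕ, U m := by
    ext ω
    simp only [Set.mem_iInter, Set.mem_setOf_eq]
    constructor
    · intro h m
      have hpos : (0:ℝ) < 1/((m:ℝ)+1) := by positivity
      have hlt : sigmaT X Φ j η K ω < ((t + 1/((m:ℝ)+1) : ℝ) : EReal) :=
        lt_of_le_of_lt h (EReal.coe_lt_coe_iff.mpr (by linarith))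
      obtain ⟨a, ⟨q', hq'A, rfl⟩, halt⟩ := sInf_lt_iff.mp hlt
      exact Set.mem_biUnion (EReal.coe_lt_coe_iff.mp halt) hq'A
    · intro h
      have hlt : ∀ m : ℕ, sigmaT X Φ j η K ω < ((t + 1/((m:ℝ)+1) : ℝ) : EReal) := by
        intro m
        obtain ⟨q', hq'lt, hq'A⟩ := Set.mem_iUnion₂.mp (h m)
        exact lt_of_le_of_lt (sigma_le Φ hq'A) (EReal.coe_lt_coe_iff.mpr hq'lt)
      have hxtop : sigmaT X Φ j η K ω ≠ ⊤ := ne_top_of_lt (hlt 0)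
      by_cases hxbot : sigmaT X Φ j η K ω = ⊥
      · rw [hxbot]; exact bot_le
      · rw [← EReal.coe_toReal hxtop hxbot, EReal.coe_le_coe_iff]
        by_contra hc
        push_neg at hc
        obtain ⟨m, hm⟩ := exists_nat_one_div_lt (by linarith : (0:ℝ) <
          (sigmaT X Φ j η K ω).toReal - t)
        have h2 := hlt m
        rw [← EReal.coe_toReal hxtop hxbot, EReal.coe_lt_coe_iff] at h2
        have : (1:ℝ)/((m:ℝ)+1) < (sigmaT X Φ j η K ω).toReal - t := by exact_mod_cast hm
        linarith
  rw [show {ω | sigmaT X Φ j η K ω ≤ (t : EReal)} = ⋂ m : ℕ, U m from hT]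
  have key : ∀ s : ℝ, t < s → MeasurableSet[F s] (⋂ m : ℕ, U m) := by
    intro s hs
    obtain ⟨m₀, hm₀⟩ := exists_nat_one_div_lt (by linarith : (0:ℝ) < s - t)
    have hm₀' : (1:ℝ)/((m₀:ℝ)+1) < s - t := by exact_mod_cast hm₀
    have hshift : (⋂ m : ℕ, U m) = ⋂ m : ℕ, U (m + m₀) := by
      apply Set.Subset.antisymm
      · intro ω hω
        exact Set.mem_iInter.mpr fun m => Set.mem_iInter.mp hω (m + m₀)
      · intro ω hω
        exact Set.mem_iInter.mpr fun m =>
          hU_anti m (m + m₀) (by omega) (Set.mem_iInter.mp hω m)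
    rw [hshift]
    apply MeasurableSet.iInter
    intro m
    apply MeasurableSet.biUnion (Set.to_countable _)
    intro q' hq'
    apply Aset_meas hAd hRC Φ hj q'
    have h1 : (q' : ℝ) < t + 1/((m:ℝ)+(m₀:ℝ)+1) := by
      simp only [Set.mem_setOf_eq] at hq'
      push_cast at hq'
      linarith
    have h2 : (1:ℝ)/((m:ℝ)+(m₀:ℝ)+1) ≤ 1/((m₀:ℝ)+1) :=
      one_div_le_one_div_of_le (by positivity) (by have := (Nat.cast_nonneg (α := ℝ) m); linarith)
    linarith
  have h2 : MeasurableSet[⨅ s : Set.Ioi t, F (s : ℝ)] (⋂ m : ℕ, U m) :=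
    MeasurableSpace.measurableSet_iInf.mpr fun s => key s s.2
  exact (hUC1 t).symm ▸ h2

end Aux3
section Aux4

variable {D : ℕ}

open Classical in
/-- Normalized direction of a vector, with a default unit vector for `0`. -/
noncomputable def dirFun (e x : EuclideanSpace ℝ (Fin D)) : EuclideanSpace ℝ (Fin D) :=
  if x = 0 then e else ‖x‖⁻¹ • x

lemma dirFun_meas (e : EuclideanSpace ℝ (Fin D)) : Measurable (dirFun e) := by
  unfold dirFun
  have hset : MeasurableSet {x : EuclideanSpace ℝ (Fin D) | x = 0} := by
    simpa using measurableSet_singleton (0 : EuclideanSpace ℝ (Fin D))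
  exact Measurable.ite hset measurable_const ((measurable_norm.inv).smul measurable_id)

lemma dirFun_norm (e : EuclideanSpace ℝ (Fin D)) (he : ‖e‖ = 1)
    (x : EuclideanSpace ℝ (Fin D)) : ‖dirFun e x‖ = 1 := by
  unfold dirFun
  by_cases h0 : x = 0
  · rw [if_pos h0]; exact he
  · rw [if_neg h0, norm_smul, norm_inv, norm_norm,
      inv_mul_cancel₀ (norm_ne_zero_iff.mpr h0)]

lemma dirFun_inner (e x d : EuclideanSpace ℝ (Fin D)) :
    ⟪x, d⟫ = ‖x‖ * ⟪dirFun e x, d⟫ := by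
  unfold dirFun
  by_cases h0 : x = 0
  · rw [if_pos h0, h0]
    simp
  · rw [if_neg h0, real_inner_smul_left, ← mul_assoc,
      mul_inv_cancel₀ (norm_ne_zero_iff.mpr h0), one_mul]

end Aux4
/-- Proposition: under (NOA), every simple arbitrage is 0-admissible. -/
theorem statement1 {Ω : Type*} {mΩ : MeasurableSpace Ω} (P : Measure Ω) [IsProbabilityMeasure P]
    (F : Filtration ℝ mΩ) (hUC : UsualConditions F P) (D : ℕ)
    (X : ℝ → Ω → EuclideanSpace ℝ (Fin D))
    (hAdapted : AdaptedProc F X) (hRC : RightContinuousPaths X)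
    (hNOA : NOA F P X) :
    ∀ Φ : SimpleStrategy F (EuclideanSpace ℝ (Fin D)),
      IsArbitrage P X Φ → IsAdmissible P X Φ 0 := by
  intro Φ hArb
  show ∀ᵐ ω ∂P, ∀ t : ℝ, 0 ≤ t → -(0:ℝ) ≤ wealth X Φ t ω
  by_cases hD : D = 0
  · -- trivial case: zero-dimensional space
    subst hD
    refine Filter.Eventually.of_forall fun ω t ht => ?_
    have hw : wealth X Φ t ω = 0 := by
      unfold wealth
      apply Finset.sum_eq_zero
      intro i _
      have h0 : X (min t (Φ.τ (i+1) ω)) ω - X (min t (Φ.τ i ω)) ω = 0 := by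
        ext i'
        exact Fin.elim0 i'
      rw [h0, inner_zero_right]
    rw [hw]; norm_num
  obtain ⟨hAe, -⟩ := hArb
  -- downward induction: wealth never drops below `-η` after time `τ_{n-k}`
  have Q : ∀ k : ℕ, k ≤ Φ.n → ∀ η : ℝ, 0 < η →
      P {ω | ∃ t : ℝ, Φ.τ (Φ.n - k) ω ≤ t ∧ wealth X Φ t ω ≤ -η} = 0 := by
    intro k
    induction k with
    | zero =>
      intro _ η hη
      rw [Nat.sub_zero]
      refine measure_mono_null ?_ (ae_iff.mp hAe)
      rintro ω ⟨t, ht, hV⟩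
      simp only [Set.mem_setOf_eq, not_le]
      rw [← wealth_tail Φ ht]
      linarith
    | succ k ih =>
      intro hk η hη
      set j := Φ.n - (k+1) with hjdef
      have hj : j < Φ.n := by omega
      have hjk : Φ.n - k = j + 1 := by omega
      have ihQ : ∀ η' : ℝ, 0 < η' →
          P {ω | ∃ t : ℝ, Φ.τ (j+1) ω ≤ t ∧ wealth X Φ t ω ≤ -η'} = 0 := by
        intro η' hη'
        have := ih (by omega) η' hη'
        rwa [hjk] at this
      by_contra hP
      set B := {ω | ∃ t : ℝ, Φ.τ j ω ≤ t ∧ wealth X Φ t ω ≤ -η} with hBdef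
      have hKex : ∃ K : ℕ, 0 < K ∧ 0 < P (B ∩ {ω | ‖Φ.φ j ω‖ ≤ (K:ℝ)}) := by
        by_contra hno
        push_neg at hno
        apply hP
        have hsub : B ⊆ ⋃ K : ℕ, (B ∩ {ω | ‖Φ.φ j ω‖ ≤ (((K+1:ℕ)):ℝ)}) := by
          intro ω hω
          obtain ⟨K, hK⟩ := exists_nat_ge (‖Φ.φ j ω‖)
          refine Set.mem_iUnion.mpr ⟨K, hω, ?_⟩
          show ‖Φ.φ j ω‖ ≤ (((K+1:ℕ)):ℝ)
          push_cast
          linarith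
        refine le_antisymm ?_ zero_le
        calc P B ≤ ∑' K : ℕ, P (B ∩ {ω | ‖Φ.φ j ω‖ ≤ (((K+1:ℕ)):ℝ)}) :=
              (measure_mono hsub).trans (measure_iUnion_le _)
          _ = 0 := by
              have hz : ∀ K : ℕ, P (B ∩ {ω | ‖Φ.φ j ω‖ ≤ (((K+1:ℕ)):ℝ)}) = 0 := by
                intro K
                have := hno (K+1) (by omega)
                exact le_antisymm this zero_le
              simp only [hz, tsum_zero]
      obtain ⟨K, hK0, hPBK⟩ := hKex
      have hKpos : (0:ℝ) < (K:ℝ) := by exact_mod_cast hK0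
      set σ := sigmaT X Φ j η (K:ℝ) with hσdef
      have hstop : IsStoppingTimeE F σ := sigma_stopping hUC.1 hAdapted hRC Φ hj η (K:ℝ)
      have hσ0 : ∀ ω, 0 ≤ σ ω := fun ω => sigma_nonneg Φ hj.le η (K:ℝ) ω
      have hBsub : B ∩ {ω | ‖Φ.φ j ω‖ ≤ (K:ℝ)} ⊆ {ω | σ ω < ⊤} := by
        rintro ω ⟨hωB, hφK⟩
        obtain ⟨t, hτt, hVt⟩ := hωB
        have hcwa := wealth_rightCont hRC Φ ω t
        have hmem : (fun s => wealth X Φ s ω) ⁻¹' Iio (-(η/2)) ∈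
            nhdsWithin t (Ici t) := hcwa (Iio_mem_nhds (by linarith))
        obtain ⟨U, hUopen, htU, hUsub⟩ := mem_nhdsWithin.mp hmem
        obtain ⟨dlt, hdlt, hball⟩ := Metric.isOpen_iff.mp hUopen t htU
        obtain ⟨q', hq'1, hq'2⟩ := exists_rat_btwn (lt_add_of_pos_right t hdlt)
        have hq'U : (q' : ℝ) ∈ U := hball (by rw [Metric.mem_ball, Real.dist_eq]; rw [abs_of_nonneg (by linarith)]; linarith)
        have hq'V : wealth X Φ (q' : ℝ) ω < -(η/2) := hUsub ⟨hq'U, le_of_lt hq'1⟩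
        have hq'A : ω ∈ Aset X Φ j η (K:ℝ) q' :=
          ⟨hτt.trans hq'1.le, hq'V.le, hφK⟩
        exact lt_of_le_of_lt (sigma_le Φ hq'A) (EReal.coe_lt_top _)
      have hPσ : 0 < P {ω | σ ω < ⊤} := lt_of_lt_of_le hPBK (measure_mono hBsub)
      -- the direction
      have he : ‖(EuclideanSpace.single (⟨0, Nat.pos_of_ne_zero hD⟩ : Fin D) (1:ℝ))‖ = 1 := by
        simp
      set g : EuclideanSpace ℝ (Fin D) → EuclideanSpace ℝ (Fin D) :=
        dirFun (EuclideanSpace.single (⟨0, Nat.pos_of_ne_zero hD⟩ : Fin D) (1:ℝ)) with hg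
      set H : Ω → EuclideanSpace ℝ (Fin D) := fun ω => g (Φ.φ j ω) with hH
      have hgmeas : Measurable g := dirFun_meas _
      have hHnorm : ∀ ω, ‖H ω‖ = 1 := fun ω => dirFun_norm _ he _
      have hdir : IsDirection F P σ H := by
        constructor
        · intro B' hB' t
          have hsub2 : {ω | σ ω ≤ (t:EReal)} ⊆
              {ω | ((Φ.τ j ω : ℝ):EReal) ≤ (t:EReal)} :=
            fun ω h => le_trans (sigma_ge Φ j η (K:ℝ) ω) h
          have heq : H ⁻¹' B' ∩ {ω | σ ω ≤ (t:EReal)} =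
              (Φ.φ j ⁻¹' (g ⁻¹' B') ∩ {ω | ((Φ.τ j ω : ℝ):EReal) ≤ (t:EReal)}) ∩
                {ω | σ ω ≤ (t:EReal)} := by
            ext ω
            simp only [Set.mem_inter_iff, Set.mem_preimage, Set.mem_setOf_eq, hH]
            constructor
            · rintro ⟨h1, h2⟩; exact ⟨⟨h1, hsub2 h2⟩, h2⟩
            · rintro ⟨⟨h1, -⟩, h2⟩; exact ⟨h1, h2⟩
          rw [heq]
          exact (Φ.φ_meas j hj _ (hgmeas hB') t).inter (hstop t)
        · exact Filter.Eventually.of_forall hHnorm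
      have hinner : ∀ (ω : Ω) (d : EuclideanSpace ℝ (Fin D)),
          ⟪Φ.φ j ω, d⟫ = ‖Φ.φ j ω‖ * ⟪H ω, d⟫ := fun ω d => dirFun_inner _ _ _
      set ε := η / (4 * (K:ℝ)) with hε
      have hεpos : 0 < ε := div_pos hη (mul_pos (by norm_num) hKpos)
      have hA := hNOA σ hstop hσ0 hPσ H hdir ε hεpos
      set N := {ω | ∃ t : ℝ, Φ.τ (j+1) ω ≤ t ∧ wealth X Φ t ω ≤ -(η/4)} with hN
      have hAN : {ω | σ ω < ⊤} ∩ {ω | ∃ δ : ℝ, δ < ε ∧ ∀ t : ℝ, σ ω ≤ (t : EReal) →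
          ⟪H ω, X t ω - X (σ ω).toReal ω⟫ ≤ δ} ⊆ N := by
        rintro ω ⟨hfin, δ, hδε, hδ⟩
        rw [Set.mem_setOf_eq] at hfin
        obtain ⟨q'₀, hq'₀, -⟩ := sigma_lt Φ (show σ ω < ⊤ from hfin)
        have hφK : ‖Φ.φ j ω‖ ≤ (K:ℝ) := hq'₀.2.2
        have hσbot : σ ω ≠ ⊥ := by
          intro hb
          have h00 := hσ0 ω
          rw [hb] at h00
          simp at h00
        have hσcoe : (((σ ω).toReal : ℝ) : EReal) = σ ω := EReal.coe_toReal hfin.ne hσbot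
        set r := (σ ω).toReal with hr
        have hτr : Φ.τ j ω ≤ r := by
          have h1 := sigma_ge (X := X) Φ j η (K:ℝ) ω
          rw [← hσdef, ← hσcoe] at h1
          exact EReal.coe_le_coe_iff.mp h1
        have hVr : wealth X Φ r ω ≤ -(η/2) := by
          have hqs : ∀ k : ℕ, ∃ q' : ℚ, ω ∈ Aset X Φ j η (K:ℝ) q' ∧ r ≤ (q':ℝ) ∧
              (q':ℝ) < r + 1/((k:ℝ)+1) := by
            intro k
            have hlt : σ ω < ((r + 1/((k:ℝ)+1) : ℝ) : EReal) := by
              rw [← hσcoe]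
              refine EReal.coe_lt_coe_iff.mpr ?_
              have hp : (0:ℝ) < 1/((k:ℝ)+1) := by positivity
              linarith
            obtain ⟨q', hq', hq'lt⟩ := sigma_lt Φ hlt
            refine ⟨q', hq', ?_, EReal.coe_lt_coe_iff.mp hq'lt⟩
            have h1 := sigma_le Φ hq'
            rw [← hσdef, ← hσcoe] at h1
            exact EReal.coe_le_coe_iff.mp h1
          choose qs hqsA hqsge hqslt using hqs
          have htd : Tendsto (fun k : ℕ => ((qs k : ℝ))) atTop (nhdsWithin r (Ici r)) := by
            apply tendsto_nhdsWithin_of_tendsto_nhds_of_eventually_within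
            · have h1 : Tendsto (fun k : ℕ => 1/((k:ℝ)+1)) atTop (nhds 0) :=
                tendsto_one_div_add_atTop_nhds_zero_nat
              have hub : Tendsto (fun k : ℕ => r + 1/((k:ℝ)+1)) atTop (nhds r) := by
                simpa using
                  ((tendsto_const_nhds : Tendsto (fun _ : ℕ => r) atTop (nhds r))).add h1
              exact tendsto_of_tendsto_of_tendsto_of_le_of_le tendsto_const_nhds hub hqsge
                (fun k => (hqslt k).le)
            · exact Filter.Eventually.of_forall hqsge
          have hcomp := (wealth_rightCont hRC Φ ω r).comp htd
          exact le_of_tendsto hcomp (Filter.Eventually.of_forall fun k => (hqsA k).2.1)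
        rcases le_or_gt (Φ.τ (j+1) ω) r with hcase | hcase
        · exact ⟨r, hcase, by linarith⟩
        · refine ⟨Φ.τ (j+1) ω, le_rfl, ?_⟩
          have hdec := wealth_decomp (X := X) Φ hj hτr hcase.le le_rfl
          have hin : ⟪H ω, X (Φ.τ (j+1) ω) ω - X r ω⟫ ≤ δ := by
            refine hδ (Φ.τ (j+1) ω) ?_
            rw [← hσcoe]
            exact EReal.coe_le_coe_iff.mpr hcase.le
          have hb : ⟪Φ.φ j ω, X (Φ.τ (j+1) ω) ω - X r ω⟫ ≤ (K:ℝ) * ε := by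
            rw [hinner ω (X (Φ.τ (j+1) ω) ω - X r ω)]
            rcases le_or_gt (⟪H ω, X (Φ.τ (j+1) ω) ω - X r ω⟫) 0 with h | h
            · have h2 : ‖Φ.φ j ω‖ * ⟪H ω, X (Φ.τ (j+1) ω) ω - X r ω⟫ ≤ 0 := by
                have := norm_nonneg (Φ.φ j ω)
                nlinarith
              nlinarith
            · calc ‖Φ.φ j ω‖ * ⟪H ω, X (Φ.τ (j+1) ω) ω - X r ω⟫
                  ≤ (K:ℝ) * ⟪H ω, X (Φ.τ (j+1) ω) ω - X r ω⟫ :=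
                    mul_le_mul_of_nonneg_right hφK h.le
                _ ≤ (K:ℝ) * ε := mul_le_mul_of_nonneg_left (by linarith) hKpos.le
          have hKε : (K:ℝ) * ε = η/4 := by
            rw [hε]
            field_simp
          rw [hdec]
          linarith
      have hPN : P N = 0 := ihQ (η/4) (by linarith)
      exact absurd (measure_mono_null hAN hPN) (ne_of_gt hA)
  -- conclude
  have hQ0 : ∀ η : ℝ, 0 < η →
      P {ω | ∃ t : ℝ, Φ.τ 0 ω ≤ t ∧ wealth X Φ t ω ≤ -η} = 0 := by
    intro η hη
    have := Q Φ.n le_rfl η hη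
    rwa [Nat.sub_self] at this
  have hae : ∀ᵐ ω ∂P, ∀ k : ℕ,
      ¬ (∃ t : ℝ, Φ.τ 0 ω ≤ t ∧ wealth X Φ t ω ≤ -(1/((k:ℝ)+1))) := by
    rw [ae_all_iff]
    intro k
    rw [ae_iff]
    refine measure_mono_null ?_ (hQ0 (1/((k:ℝ)+1)) (by positivity))
    intro ω hω
    simpa using hω
  refine hae.mono fun ω hω t ht => ?_
  rw [neg_zero]
  by_contra hc
  push_neg at hc
  obtain ⟨k, hk⟩ := exists_nat_one_div_lt (by linarith : (0:ℝ) < -(wealth X Φ t ω))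
  refine hω k ⟨t, by rw [Φ.τ_zero]; exact ht, ?_⟩
  have hk' : (1:ℝ)/((k:ℝ)+1) < -(wealth X Φ t ω) := by exact_mod_cast hk
  linarith

end SimpleArbitrage
end

section
/- Let X be a right-continuous adapted ℝ^D-valued process on a filtered probability space satisfying the usual conditions. If X admits a 0-admissible simple arbitrage, then X admits a 0-admissible arbitrage of the particularly simple form H 1_{(σ,τ]}, where σ ≤ τ are bounded stopping times and H is an 𝓕_σ-measurable direction. -/
open MeasureTheory ProbabilityTheory Filter Set
open scoped ENNReal NNReal RealInnerProductSpace

namespace SimpleArbitrage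

variable {Ω : Type*} {mΩ : MeasurableSpace Ω}
variable {E : Type*} [NormedAddCommGroup E] [InnerProductSpace ℝ E] [MeasurableSpace E]

/-- (Proposition: reduction of 0-admissible simple arbitrage to the form
`H 1_{(σ,τ]}` with bounded stopping times `σ ≤ τ` and an `𝓕_σ`-measurable direction `H`). -/
theorem statement2 {Ω : Type*} {mΩ : MeasurableSpace Ω} (P : Measure Ω) [IsProbabilityMeasure P]
    (F : Filtration ℝ mΩ) (hUC : UsualConditions F P) (D : ℕ)
    (X : ℝ → Ω → EuclideanSpace ℝ (Fin D))
    (hAdapted : AdaptedProc F X) (hRC : RightContinuousPaths X)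
    (hArb : ∃ Φ : SimpleStrategy F (EuclideanSpace ℝ (Fin D)),
      IsArbitrage P X Φ ∧ IsAdmissible P X Φ 0) :
    ExistsAdmissiblePairArbitrage F P X := by
  classical
  obtain ⟨Φ, hIsArb, hAdm⟩ := hArb
  -- monotonicity of the trading times
  have hmono : ∀ i j : ℕ, i ≤ j → j ≤ Φ.n → ∀ ω, Φ.τ i ω ≤ Φ.τ j ω := by
    intro i j hij hjn ω
    induction j with
    | zero =>
      have h0 : i = 0 := Nat.le_zero.mp hij
      simp [h0]
    | succ k ih =>
      rcases Nat.eq_or_lt_of_le hij with h | h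
      · exact le_of_eq (by rw [h])
      · exact le_trans (ih (Nat.lt_succ_iff.mp h) (le_trans (Nat.le_succ k) hjn))
          (Φ.τ_mono k (Nat.lt_of_succ_le hjn) ω)
  have hτ0 : ∀ j : ℕ, j ≤ Φ.n → ∀ ω, 0 ≤ Φ.τ j ω := by
    intro j hj ω
    rw [← Φ.τ_zero ω]
    exact hmono 0 j (Nat.zero_le _) hj ω
  -- partial wealth sums
  set U : ℕ → Ω → ℝ := fun j ω =>
    ∑ i ∈ Finset.range j, ⟪Φ.φ i ω, X (Φ.τ (i+1) ω) ω - X (Φ.τ i ω) ω⟫ with hU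
  -- choose the critical index j₀
  have hfind : ∃ j : ℕ, 0 < P {ω | 0 < U j ω} := ⟨Φ.n, hIsArb.2⟩
  have hj₁pos : 0 < Nat.find hfind := by
    rcases Nat.eq_zero_or_pos (Nat.find hfind) with h | h
    swap
    · exact h
    · exfalso
      have hspec := Nat.find_spec hfind
      rw [h] at hspec
      have : {ω | 0 < U 0 ω} = (∅ : Set Ω) := by
        ext ω; simp [hU]
      rw [this] at hspec
      simp at hspec
  obtain ⟨j₀, hj₀⟩ : ∃ j₀ : ℕ, j₀ + 1 = Nat.find hfind :=
    ⟨Nat.find hfind - 1, Nat.succ_pred_eq_of_pos hj₁pos⟩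
  have hj₀1n : j₀ + 1 ≤ Φ.n := by
    rw [hj₀]
    exact Nat.find_le (show 0 < P {ω | 0 < U Φ.n ω} from hIsArb.2)
  have hj₀n : j₀ < Φ.n := hj₀1n
  have hpos : 0 < P {ω | 0 < U (j₀ + 1) ω} := by rw [hj₀]; exact Nat.find_spec hfind
  have hPj₀ : P {ω | 0 < U j₀ ω} = 0 := by
    have h := Nat.find_min hfind (show j₀ < Nat.find hfind by omega)
    exact le_antisymm (not_lt.mp h) (zero_le)
  -- the dimension is positive
  have hD : 0 < D := by
    by_contra h
    have hD0 : D = 0 := Nat.le_zero.mp (not_lt.mp h)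
    subst hD0
    haveI : Subsingleton (EuclideanSpace ℝ (Fin 0)) := ⟨fun a b => by ext i; exact i.elim0⟩
    have hz : {ω | 0 < wealthEnd X Φ ω} = (∅ : Set Ω) := by
      ext ω
      have : wealthEnd X Φ ω = 0 := by
        unfold wealthEnd
        refine Finset.sum_eq_zero fun i _ => ?_
        rw [Subsingleton.elim (X (Φ.τ (i+1) ω) ω - X (Φ.τ i ω) ω) 0, inner_zero_right]
      simp [this]
    have h2 := hIsArb.2
    rw [hz] at h2
    simp at h2
  -- the unit vector and direction
  set e₀ : EuclideanSpace ℝ (Fin D) := EuclideanSpace.single (⟨0, hD⟩ : Fin D) (1:ℝ) with he₀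
  have he₀norm : ‖e₀‖ = 1 := by rw [he₀, EuclideanSpace.norm_single]; norm_num
  set g : EuclideanSpace ℝ (Fin D) → EuclideanSpace ℝ (Fin D) :=
    fun v => if v = 0 then e₀ else ‖v‖⁻¹ • v with hg
  have hgmeas : Measurable g :=
    Measurable.ite measurableSet_eq measurable_const ((measurable_norm.inv).smul measurable_id)
  set σf : Ω → ℝ := fun ω => Φ.τ j₀ ω with hσf
  set τf : Ω → ℝ := fun ω => Φ.τ (j₀+1) ω with hτf
  have hστ : ∀ ω, σf ω ≤ τf ω := fun ω => Φ.τ_mono j₀ hj₀n ω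
  have hσf0 : ∀ ω, 0 ≤ σf ω := fun ω => hτ0 j₀ (le_of_lt hj₀n) ω
  have hσst : IsStoppingTime F (fun ω => ((σf ω : ℝ) : WithTop ℝ)) := Φ.τ_stopping j₀ (le_of_lt hj₀n)
  have hτfst : IsStoppingTime F (fun ω => ((τf ω : ℝ) : WithTop ℝ)) := Φ.τ_stopping (j₀+1) hj₀1n
  set H : Ω → EuclideanSpace ℝ (Fin D) := fun ω => g (Φ.φ j₀ ω) with hH
  set τ'' : Ω → ℝ := fun ω => if Φ.φ j₀ ω = 0 then σf ω else τf ω with hτ''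
  have hστ'' : ∀ ω, σf ω ≤ τ'' ω := by
    intro ω
    rw [hτ'']
    by_cases h : Φ.φ j₀ ω = 0
    · simp [h]
    · simp [h, hστ ω]
  -- measurability of H at time σf
  have hHmeas : MeasurableAtTime F (fun ω => ((σf ω : ℝ) : EReal)) H := by
    intro B hB t
    have h := Φ.φ_meas j₀ hj₀n (g ⁻¹' B) (hgmeas hB) t
    exact h
  -- key measurable set {φ j₀ = 0} ∩ {σf ≤ t}
  have hset0 : ∀ t : ℝ, MeasurableSet[F t] ({ω | Φ.φ j₀ ω = 0} ∩ {ω | σf ω ≤ t}) := by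
    intro t
    have h := Φ.φ_meas j₀ hj₀n {(0 : EuclideanSpace ℝ (Fin D))} (measurableSet_singleton 0) t
    have heq : Φ.φ j₀ ⁻¹' {0} ∩ {ω | ((Φ.τ j₀ ω : ℝ) : EReal) ≤ (t : EReal)}
        = {ω | Φ.φ j₀ ω = 0} ∩ {ω | σf ω ≤ t} := by
      ext ω; simp [hσf, EReal.coe_le_coe_iff]
    rw [heq] at h
    exact h
  -- τ'' is a stopping time
  have hτ''st : IsStoppingTime F (fun ω => ((τ'' ω : ℝ) : WithTop ℝ)) := by
    intro t
    simp only [WithTop.coe_le_coe]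
    have h1 := hset0 t
    have hτt : MeasurableSet[F t] {ω | τf ω ≤ t} := by simpa only [WithTop.coe_le_coe] using hτfst t
    have heq : {ω | τ'' ω ≤ t} =
        ({ω | Φ.φ j₀ ω = 0} ∩ {ω | σf ω ≤ t}) ∪
        ({ω | τf ω ≤ t} \ (({ω | Φ.φ j₀ ω = 0} ∩ {ω | σf ω ≤ t}) ∩ {ω | τf ω ≤ t})) := by
      ext ω
      simp only [Set.mem_setOf_eq, Set.mem_union, Set.mem_inter_iff, Set.mem_diff, hτ'']
      by_cases h : Φ.φ j₀ ω = 0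
      · rw [if_pos h]
        constructor
        · intro hle; exact Or.inl ⟨h, hle⟩
        · rintro (⟨_, hle⟩ | ⟨hle, _⟩)
          · exact hle
          · exact le_trans (hστ ω) hle
      · rw [if_neg h]
        constructor
        · intro hle; exact Or.inr ⟨hle, fun hc => h hc.1.1⟩
        · rintro (⟨hc, _⟩ | ⟨hle, _⟩)
          · exact absurd hc h
          · exact hle
    rw [heq]
    exact h1.union (hτt.diff (h1.inter hτt))
  -- H has norm one
  have hHnorm : ∀ ω, ‖H ω‖ = 1 := by
    intro ω
    rw [hH, hg]
    by_cases h : Φ.φ j₀ ω = 0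
    · simp only [h, if_true]; exact he₀norm
    · simp only [h, if_false]
      rw [norm_smul, norm_inv, norm_norm, inv_mul_cancel₀ (norm_ne_zero_iff.mpr h)]
  -- wealth at intermediate times in the critical interval
  have Wlem : ∀ ω, ∀ s : ℝ, σf ω ≤ s → s ≤ τf ω →
      wealth X Φ s ω = U j₀ ω + ⟪Φ.φ j₀ ω, X s ω - X (σf ω) ω⟫ := by
    intro ω s hs1 hs2
    unfold wealth
    rw [← Finset.sum_range_add_sum_Ico _ hj₀1n]
    have h2 : (∑ i ∈ Finset.Ico (j₀+1) Φ.n,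
        ⟪Φ.φ i ω, X (min s (Φ.τ (i+1) ω)) ω - X (min s (Φ.τ i ω)) ω⟫) = 0 := by
      refine Finset.sum_eq_zero fun i hi => ?_
      obtain ⟨hi1, hi2⟩ := Finset.mem_Ico.mp hi
      have hsτi : s ≤ Φ.τ i ω := le_trans hs2 (hmono (j₀+1) i hi1 (le_of_lt hi2) ω)
      have hsτi1 : s ≤ Φ.τ (i+1) ω := le_trans hsτi (Φ.τ_mono i hi2 ω)
      rw [min_eq_left hsτi1, min_eq_left hsτi, sub_self, inner_zero_right]
    rw [h2, add_zero, Finset.sum_range_succ]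
    congr 1
    · rw [hU]
      refine Finset.sum_congr rfl fun i hi => ?_
      have hi' : i < j₀ := Finset.mem_range.mp hi
      have hτi1 : Φ.τ (i+1) ω ≤ s := le_trans (hmono (i+1) j₀ hi' (le_of_lt hj₀n) ω) hs1
      have hτi : Φ.τ i ω ≤ s := le_trans (hmono i j₀ (le_of_lt hi') (le_of_lt hj₀n) ω) hs1
      rw [min_eq_right hτi1, min_eq_right hτi]
    · rw [min_eq_left hs2, min_eq_right hs1]
  -- the almost-sure good set
  have haeGood : ∀ᵐ ω ∂P, (∀ t : ℝ, 0 ≤ t → 0 ≤ wealth X Φ t ω) ∧ U j₀ ω = 0 := by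
    have h1 : ∀ᵐ ω ∂P, ∀ t : ℝ, 0 ≤ t → 0 ≤ wealth X Φ t ω := by
      filter_upwards [hAdm] with ω h t ht
      have := h t ht
      linarith
    have h2 : ∀ᵐ ω ∂P, ¬ (0 < U j₀ ω) := by
      rw [ae_iff]
      simpa [not_not] using hPj₀
    filter_upwards [h1, h2] with ω ha hb
    refine ⟨ha, le_antisymm (not_lt.mp hb) ?_⟩
    have heq := Wlem ω (σf ω) le_rfl (hστ ω)
    rw [sub_self, inner_zero_right, add_zero] at heq
    rw [← heq]
    exact ha (σf ω) (hσf0 ω)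
  -- key nonnegativity of the pair-strategy wealth (unnormalized)
  have key : ∀ ω, ((∀ t : ℝ, 0 ≤ t → 0 ≤ wealth X Φ t ω) ∧ U j₀ ω = 0) → ∀ t : ℝ, 0 ≤ t →
      0 ≤ ⟪Φ.φ j₀ ω, X (min t (τf ω)) ω - X (min t (σf ω)) ω⟫ := by
    rintro ω ⟨hG, hU0⟩ t ht
    rcases le_or_gt (σf ω) t with h | h
    · have hs1 : σf ω ≤ min t (τf ω) := le_min h (hστ ω)
      have hs2 : min t (τf ω) ≤ τf ω := min_le_right _ _
      have heq := Wlem ω (min t (τf ω)) hs1 hs2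
      have h0 : 0 ≤ wealth X Φ (min t (τf ω)) ω :=
        hG _ (le_trans (hσf0 ω) hs1)
      rw [heq, hU0, zero_add] at h0
      rwa [min_eq_right h]
    · have h1 : min t (τf ω) = t := min_eq_left (le_trans (le_of_lt h) (hστ ω))
      have h2 : min t (σf ω) = t := min_eq_left (le_of_lt h)
      rw [h1, h2, sub_self, inner_zero_right]
  -- positivity of the unnormalized pair arbitrage
  set A : Set Ω := {ω | 0 < ⟪H ω, X (τ'' ω) ω - X (σf ω) ω⟫} with hA
  have hPA : 0 < P A := by
    have hsub : {ω | 0 < U (j₀+1) ω} \ {ω | 0 < U j₀ ω} ⊆ A := by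
      rintro ω ⟨h1, h2⟩
      have hinc : ⟪Φ.φ j₀ ω, X (τf ω) ω - X (σf ω) ω⟫ = U (j₀+1) ω - U j₀ ω := by
        rw [hU]
        simp [Finset.sum_range_succ, hτf, hσf]
      have hple : U j₀ ω ≤ 0 := not_lt.mp h2
      have hp : 0 < ⟪Φ.φ j₀ ω, X (τf ω) ω - X (σf ω) ω⟫ := by
        rw [hinc]
        have h1' : 0 < U (j₀+1) ω := h1
        linarith
      have hφ : Φ.φ j₀ ω ≠ 0 := by
        intro hc
        rw [hc, inner_zero_left] at hp
        exact lt_irrefl 0 hp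
      show 0 < ⟪H ω, X (τ'' ω) ω - X (σf ω) ω⟫
      rw [hH, hg]
      simp only [hφ, if_false]
      rw [hτ'']
      simp only [hφ, if_false]
      rw [real_inner_smul_left]
      exact mul_pos (inv_pos.mpr (norm_pos_iff.mpr hφ)) hp
    calc (0 : ℝ≥0∞) < P {ω | 0 < U (j₀+1) ω} := hpos
      _ = P ({ω | 0 < U (j₀+1) ω} \ {ω | 0 < U j₀ ω}) := (measure_diff_null hPj₀).symm
      _ ≤ P A := measure_mono hsub
  -- choose the truncation level m
  obtain ⟨m, hm⟩ : ∃ m : ℕ, 0 < P (A ∩ {ω | τ'' ω ≤ (m : ℝ)}) := by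
    by_contra hc
    push_neg at hc
    have hcover : A ⊆ ⋃ k : ℕ, (A ∩ {ω | τ'' ω ≤ (k : ℝ)}) := by
      intro ω hω
      obtain ⟨k, hk⟩ := exists_nat_ge (τ'' ω)
      exact Set.mem_iUnion.mpr ⟨k, hω, hk⟩
    have h0 : P A = 0 := by
      refine le_antisymm ?_ (zero_le)
      calc P A ≤ P (⋃ k : ℕ, (A ∩ {ω | τ'' ω ≤ (k : ℝ)})) := measure_mono hcover
        _ = 0 := measure_iUnion_null fun k => le_antisymm (hc k) (zero_le)
    rw [h0] at hPA
    exact lt_irrefl 0 hPA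
  -- the final truncated objects
  set σ' : Ω → ℝ := fun ω => min (σf ω) (m : ℝ) with hσ'
  set τB : Ω → ℝ := fun ω => min (τ'' ω) (m : ℝ) with hτB
  set H' : Ω → EuclideanSpace ℝ (Fin D) := fun ω => if σf ω ≤ (m : ℝ) then H ω else e₀ with hH'
  refine ⟨σ', τB, H', ?_, ?_, ?_, ?_, ?_, ?_, ?_, ?_, ?_⟩
  · have h := hσst.min (isStoppingTime_const F (m : ℝ))
    simpa only [hσ', WithTop.coe_min] using h
  · have h := hτ''st.min (isStoppingTime_const F (m : ℝ))
    simpa only [hτB, WithTop.coe_min] using h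
  · intro ω
    exact le_min (hσf0 ω) (Nat.cast_nonneg m)
  · intro ω
    exact min_le_min (hστ'' ω) le_rfl
  · exact ⟨(m : ℝ), fun ω => min_le_right _ _⟩
  · -- IsDirection for H' at σ'
    constructor
    · intro B hB t
      rcases le_or_gt (m : ℝ) t with hmt | htm
      · have huniv : {ω | ((σ' ω : ℝ) : EReal) ≤ (t : EReal)} = Set.univ := by
          ext ω
          simp only [Set.mem_setOf_eq, Set.mem_univ, iff_true, EReal.coe_le_coe_iff]
          exact le_trans (min_le_right _ _) hmt
        rw [huniv, Set.inter_univ]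
        have hdec : H' ⁻¹' B =
            ((H ⁻¹' B ∩ {ω | σf ω ≤ (m : ℝ)}) ∪
             ({ω | σf ω ≤ (m : ℝ)}ᶜ ∩ (if e₀ ∈ B then Set.univ else ∅))) := by
          ext ω
          by_cases h : σf ω ≤ (m : ℝ)
          · simp [hH', h]
          · by_cases hB0 : e₀ ∈ B <;> simp [hH', h, hB0]
        rw [hdec]
        have hm1 : MeasurableSet[F t] (H ⁻¹' B ∩ {ω | σf ω ≤ (m : ℝ)}) := by
          have h := hHmeas B hB (m : ℝ)
          have heq : H ⁻¹' B ∩ {ω | ((σf ω : ℝ) : EReal) ≤ ((m : ℝ) : EReal)}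
              = H ⁻¹' B ∩ {ω | σf ω ≤ (m : ℝ)} := by
            ext ω; simp only [Set.mem_inter_iff, Set.mem_preimage, Set.mem_setOf_eq, EReal.coe_le_coe_iff]
          rw [heq] at h
          exact F.mono hmt _ h
        have hm2 : MeasurableSet[F t] ({ω | σf ω ≤ (m : ℝ)}ᶜ ∩ (if e₀ ∈ B then Set.univ else ∅)) := by
          have hσm : MeasurableSet[F t] {ω | σf ω ≤ (m : ℝ)} := F.mono hmt _ (by simpa only [WithTop.coe_le_coe] using hσst (m : ℝ))
          by_cases hB0 : e₀ ∈ B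
          · simpa [hB0] using hσm.compl
          · simp [hB0]
        exact hm1.union hm2
      · have heq : H' ⁻¹' B ∩ {ω | ((σ' ω : ℝ) : EReal) ≤ (t : EReal)}
            = H ⁻¹' B ∩ {ω | ((σf ω : ℝ) : EReal) ≤ (t : EReal)} := by
          ext ω
          simp only [Set.mem_inter_iff, Set.mem_preimage, Set.mem_setOf_eq, EReal.coe_le_coe_iff]
          constructor
          · rintro ⟨hBmem, hle⟩
            have hσt : σf ω ≤ t := by
              rcases min_le_iff.mp hle with h | h
              · exact h
              · exact absurd h (not_le.mpr htm)
            refine ⟨?_, hσt⟩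
            have hσm : σf ω ≤ (m : ℝ) := le_trans hσt (le_of_lt htm)
            simpa [hH', hσm] using hBmem
          · rintro ⟨hBmem, hle⟩
            have hσm : σf ω ≤ (m : ℝ) := le_trans hle (le_of_lt htm)
            exact ⟨by simpa [hH', hσm] using hBmem, le_trans (min_le_left _ _) hle⟩
        rw [heq]
        exact hHmeas B hB t
    · refine Filter.Eventually.of_forall fun ω => ?_
      rw [hH']
      by_cases h : σf ω ≤ (m : ℝ)
      · simp only [h, if_true]; exact hHnorm ω
      · simp only [h, if_false]; exact he₀norm
  · -- a.s. nonnegativity of the pair wealth at all times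
    filter_upwards [haeGood] with ω hGood t ht
    show 0 ≤ ⟪H' ω, X (min t (τB ω)) ω - X (min t (σ' ω)) ω⟫
    by_cases hσm : σf ω ≤ (m : ℝ)
    · simp only [hH']
      rw [if_pos hσm]
      by_cases hφ : Φ.φ j₀ ω = 0
      · have hts : τB ω = σ' ω := by rw [hτB, hσ', hτ'']; simp [hφ]
        rw [hts, sub_self, inner_zero_right]
      · have hτeq : τB ω = min (τf ω) (m : ℝ) := by rw [hτB, hτ'']; simp [hφ]
        have hmin1 : min t (τB ω) = min (min t (m : ℝ)) (τf ω) := by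
          rw [hτeq, min_comm (τf ω) (m : ℝ), ← min_assoc]
        have hmin2 : min t (σ' ω) = min (min t (m : ℝ)) (σf ω) := by
          simp only [hσ']
          rw [min_comm (σf ω) (m : ℝ), ← min_assoc]
        rw [hmin1, hmin2]
        simp only [hH, hg, hφ, if_false]
        rw [real_inner_smul_left]
        exact mul_nonneg (inv_nonneg.mpr (norm_nonneg _))
          (key ω hGood (min t (m : ℝ)) (le_min ht (Nat.cast_nonneg m)))
    · have h1 : σ' ω = (m : ℝ) := min_eq_right (le_of_lt (not_le.mp hσm))
      have h2 : τB ω = (m : ℝ) :=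
        min_eq_right (le_trans (le_of_lt (not_le.mp hσm)) (hστ'' ω))
      rw [h1, h2, sub_self, inner_zero_right]
  · -- a.s. nonnegativity of the terminal wealth
    filter_upwards [haeGood] with ω hGood
    have hend : ⟪H' ω, X (τB ω) ω - X (σ' ω) ω⟫
        = ⟪H' ω, X (min (m : ℝ) (τB ω)) ω - X (min (m : ℝ) (σ' ω)) ω⟫ := by
      rw [min_eq_right (min_le_right (τ'' ω) (m : ℝ)), min_eq_right (min_le_right (σf ω) (m : ℝ))]
    rw [hend]
    -- repeat the argument of the previous bullet at t = m
    by_cases hσm : σf ω ≤ (m : ℝ)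
    · simp only [hH']
      rw [if_pos hσm]
      by_cases hφ : Φ.φ j₀ ω = 0
      · have hts : τB ω = σ' ω := by rw [hτB, hσ', hτ'']; simp [hφ]
        rw [hts, sub_self, inner_zero_right]
      · have hτeq : τB ω = min (τf ω) (m : ℝ) := by rw [hτB, hτ'']; simp [hφ]
        have hmin1 : min (m : ℝ) (τB ω) = min (min (m : ℝ) (m : ℝ)) (τf ω) := by
          rw [hτeq, min_comm (τf ω) (m : ℝ), ← min_assoc]
        have hmin2 : min (m : ℝ) (σ' ω) = min (min (m : ℝ) (m : ℝ)) (σf ω) := by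
          simp only [hσ']
          rw [min_comm (σf ω) (m : ℝ), ← min_assoc]
        rw [hmin1, hmin2]
        simp only [hH, hg, hφ, if_false]
        rw [real_inner_smul_left]
        exact mul_nonneg (inv_nonneg.mpr (norm_nonneg _))
          (key ω hGood (min (m : ℝ) (m : ℝ)) (le_min (Nat.cast_nonneg m) (Nat.cast_nonneg m)))
    · have h1 : σ' ω = (m : ℝ) := min_eq_right (le_of_lt (not_le.mp hσm))
      have h2 : τB ω = (m : ℝ) :=
        min_eq_right (le_trans (le_of_lt (not_le.mp hσm)) (hστ'' ω))
      rw [h1, h2, sub_self, inner_zero_right]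
  · -- positivity
    refine lt_of_lt_of_le hm (measure_mono ?_)
    rintro ω ⟨hωA, hωm⟩
    have hσm : σf ω ≤ (m : ℝ) := le_trans (hστ'' ω) hωm
    have h1 : σ' ω = σf ω := min_eq_left hσm
    have h2 : τB ω = τ'' ω := min_eq_left hωm
    show 0 < ⟪H' ω, X (τB ω) ω - X (σ' ω) ω⟫
    rw [h1, h2]
    simp only [hH']
    rw [if_pos hσm]
    exact hωA


end SimpleArbitrage
end
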